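/- Let ℓ be a prime, let (Ω, ≤) be a countable totally ordered set, and let f : Ω → ℤ_{≥1} ∪ {∞} be a function; write ℤ/ℓ^∞ℤ := ℤ_ℓ and f(v,w) := min(f(v), f(w)). Set 𝒜 := ∏_{v ∈ Ω} ℤ/ℓ^{f(v)}ℤ with the product topology. Then the unique continuous homomorphism ψ_• : ∧²_prof 𝒜 → ∏_{v<w} ℤ/ℓ^{f(v,w)}ℤ satisfying ψ_•(x ∧ y) = (x_v·y_w − x_w·y_v mod ℓ^{f(v,w)})_{v<w} for all x, y ∈ 𝒜 (where x_v, y_v denote the coordinates reduced into ℤ/ℓ^{f(v,w)}ℤ) is an isomorphism of topological groups. -/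

import Mathlib

/-!
Statement 14: for `𝒜 = ∏_{v ∈ Ω} ℤ/ℓ^{f v}` (with `ℤ/ℓ^∞ := ℤ_ℓ`), the unique
continuous homomorphism `ψ_• : ∧²_prof 𝒜 → ∏_{v<w} ℤ/ℓ^{f(v,w)}` given on pure
wedges by the 2×2 determinant of the reduced coordinates is an isomorphism of
topological groups.

Here `∧² M := (M ⊗_ℤ M)/⟨m ⊗ m⟩` and `∧²_prof 𝒜` is the inverse limit of the
groups `∧²(𝒜/U)` over the open subgroups `U` of `𝒜`, realized as the subgroup of
compatible families inside the product `∏_U ∧²(𝒜/U)` (each factor discrete).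
-/

noncomputable section

open scoped TensorProduct

/-- The submodule of `M ⊗_ℤ M` generated by the elements `m ⊗ m`. -/
def wedgeRel (M : Type*) [AddCommGroup M] : Submodule ℤ (M ⊗[ℤ] M) :=
  Submodule.span ℤ {x | ∃ m : M, x = m ⊗ₜ[ℤ] m}

/-- The exterior square `∧² M = (M ⊗_ℤ M)/⟨m ⊗ m⟩` of an abelian group. -/
def Wedge2 (M : Type*) [AddCommGroup M] : Type _ :=
  (M ⊗[ℤ] M) ⧸ wedgeRel M

instance (M : Type*) [AddCommGroup M] : AddCommGroup (Wedge2 M) :=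
  inferInstanceAs (AddCommGroup ((M ⊗[ℤ] M) ⧸ wedgeRel M))

/-- In the profinite exterior square each factor `∧²(𝒜/U)` carries the discrete
topology. -/
instance (M : Type*) [AddCommGroup M] : TopologicalSpace (Wedge2 M) := ⊥

/-- `m ∧ m'`, the image of `m ⊗ m'` in `∧² M`. -/
def wedge {M : Type*} [AddCommGroup M] (m m' : M) : Wedge2 M :=
  Submodule.Quotient.mk (m ⊗ₜ[ℤ] m')

/-- Functoriality of `∧²`. -/
def wedgeMap {M N : Type*} [AddCommGroup M] [AddCommGroup N] (f : M →+ N) :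
    Wedge2 M →+ Wedge2 N :=
  (Submodule.mapQ (wedgeRel M) (wedgeRel N)
    (TensorProduct.map f.toIntLinearMap f.toIntLinearMap)
    (by
      rw [wedgeRel, Submodule.span_le]
      rintro x ⟨m, rfl⟩
      simp only [SetLike.mem_coe, Submodule.mem_comap, TensorProduct.map_tmul]
      exact Submodule.subset_span ⟨f m, rfl⟩)).toAddMonoidHom

theorem wedgeMap_wedge {M N : Type*} [AddCommGroup M] [AddCommGroup N] (f : M →+ N)
    (m m' : M) : wedgeMap f (wedge m m') = wedge (f m) (f m') := by
  simp only [wedgeMap, wedge, LinearMap.toAddMonoidHom_coe, Submodule.mapQ_apply,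
    TensorProduct.map_tmul]
  rfl

section Profinite

variable (A : Type*) [AddCommGroup A] [TopologicalSpace A]

/-- The open subgroups of `A`. -/
abbrev OpenSub : Type _ := {U : AddSubgroup A // IsOpen (U : Set A)}

/-- The transition map `∧²(A/U) → ∧²(A/V)` for `U ≤ V`. -/
def transMap {U V : OpenSub A} (h : U.1 ≤ V.1) :
    Wedge2 (A ⧸ U.1) →+ Wedge2 (A ⧸ V.1) :=
  wedgeMap (QuotientAddGroup.map U.1 V.1 (AddMonoidHom.id A) (by simpa using h))

/-- The profinite exterior square `∧²_prof A = lim_U ∧²(A/U)`, as the subgroup of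
compatible families in `∏_U ∧²(A/U)`. -/
def compatSub : AddSubgroup (∀ U : OpenSub A, Wedge2 (A ⧸ U.1)) where
  carrier := {x | ∀ (U V : OpenSub A) (h : U.1 ≤ V.1), transMap A h (x U) = x V}
  add_mem' := by
    intro a b ha hb U V h
    simp only [Pi.add_apply, map_add, ha U V h, hb U V h]
  zero_mem' := by
    intro U V h
    simp only [Pi.zero_apply, map_zero]
  neg_mem' := by
    intro a ha U V h
    simp only [Pi.neg_apply, map_neg, ha U V h]

/-- The profinite exterior square, with the subspace topology of the product of the
(discrete) groups `∧²(A/U)`. -/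
abbrev ProfWedge2 : Type _ := ↥(compatSub A)

/-- The universal continuous alternating map `b_univ : A × A → ∧²_prof A`,
`(a₁, a₂) ↦ a₁ ∧ a₂`. -/
def bUniv (a₁ a₂ : A) : ProfWedge2 A :=
  ⟨fun U => wedge ((a₁ : A ⧸ U.1)) ((a₂ : A ⧸ U.1)), by
    intro U V h
    rw [transMap, wedgeMap_wedge]
    simp [QuotientAddGroup.map_mk]⟩

end Profinite

section Mc

variable (ℓ : ℕ) [Fact ℓ.Prime]

/-- `ℤ/ℓ^n ℤ` for `n ∈ ℕ∞`, with the convention `ℤ/ℓ^∞ ℤ := ℤ_ℓ`. -/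
def Mc : ℕ∞ → Type :=
  ENat.recTopCoe ℤ_[ℓ] (fun k => ZMod (ℓ ^ k))

instance : ∀ n : ℕ∞, CommRing (Mc ℓ n) :=
  ENat.recTopCoe (inferInstanceAs (CommRing ℤ_[ℓ]))
    (fun k => inferInstanceAs (CommRing (ZMod (ℓ ^ k))))

instance : ∀ n : ℕ∞, TopologicalSpace (Mc ℓ n) :=
  ENat.recTopCoe (inferInstanceAs (TopologicalSpace ℤ_[ℓ]))
    (fun k => inferInstanceAs (TopologicalSpace (ZMod (ℓ ^ k))))

/-- Reduction to the `∞` level (only meaningful from the `∞` level itself). -/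
def redTop : ∀ m : ℕ∞, Mc ℓ m → Mc ℓ ⊤ :=
  ENat.recTopCoe id (fun _ _ => 0)

/-- Reduction from level `m` to the finite level `k ≤ m`. -/
def redCoe (k : ℕ) : ∀ m : ℕ∞, Mc ℓ m → Mc ℓ (k : ℕ∞) :=
  ENat.recTopCoe (fun x => PadicInt.toZModPow k x)
    (fun j x => (ZMod.cast (x : ZMod (ℓ ^ j)) : ZMod (ℓ ^ k)))

/-- The reduction map `ℤ/ℓ^m ℤ → ℤ/ℓ^n ℤ` (for `n ≤ m`). -/
def red (m : ℕ∞) : ∀ n : ℕ∞, Mc ℓ m → Mc ℓ n :=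
  ENat.recTopCoe (redTop ℓ m) (fun k => redCoe ℓ k m)

variable (Ω : Type) [LinearOrder Ω] (f : Ω → ℕ∞)

/-- The profinite abelian group `𝒜 = ∏_{v ∈ Ω} ℤ/ℓ^{f v} ℤ`. -/
abbrev A : Type := ∀ v : Ω, Mc ℓ (f v)

/-- The target group `∏_{v < w} ℤ/ℓ^{f(v,w)} ℤ`. -/
abbrev T : Type := (p : {p : Ω × Ω // p.1 < p.2}) → Mc ℓ (min (f p.1.1) (f p.1.2))

/-- The family of 2×2 determinants
`(x_v·y_w − x_w·y_v mod ℓ^{f(v,w)})_{v<w}` of a pair `x, y ∈ 𝒜`, the coordinates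
being reduced into `ℤ/ℓ^{f(v,w)} ℤ`. -/
def detF (x y : A ℓ Ω f) : T ℓ Ω f := fun p =>
  red ℓ (f p.1.1) (min (f p.1.1) (f p.1.2)) (x p.1.1) *
      red ℓ (f p.1.2) (min (f p.1.1) (f p.1.2)) (y p.1.2) -
    red ℓ (f p.1.2) (min (f p.1.1) (f p.1.2)) (x p.1.2) *
      red ℓ (f p.1.1) (min (f p.1.1) (f p.1.2)) (y p.1.1)

end Mc

section Wedge2API

variable {M N : Type*} [AddCommGroup M] [AddCommGroup N]

instance (M : Type*) [AddCommGroup M] : DiscreteTopology (Wedge2 M) := ⟨rfl⟩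

instance (M : Type*) [AddCommGroup M] : ContinuousAdd (Wedge2 M) :=
  ⟨continuous_of_discreteTopology⟩

theorem wedge_add_left (m m' n : M) : wedge (m + m') n = wedge m n + wedge m' n := by
  simp only [wedge, TensorProduct.add_tmul, Submodule.Quotient.mk_add]
  rfl

theorem wedge_add_right (m n n' : M) : wedge m (n + n') = wedge m n + wedge m n' := by
  simp only [wedge, TensorProduct.tmul_add, Submodule.Quotient.mk_add]
  rfl

theorem wedge_self (m : M) : wedge m m = 0 := by
  rw [wedge]
  show (Submodule.Quotient.mk (m ⊗ₜ[ℤ] m) : (M ⊗[ℤ] M) ⧸ wedgeRel M) = 0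
  rw [Submodule.Quotient.mk_eq_zero]
  exact Submodule.subset_span ⟨m, rfl⟩

/-- `wedge` as a bi-additive map. -/
def wedgeBi : M →+ M →+ Wedge2 M where
  toFun m :=
    { toFun := fun n => wedge m n
      map_zero' := by
        show wedge m 0 = 0
        rw [wedge, TensorProduct.tmul_zero]; rfl
      map_add' := fun n n' => wedge_add_right m n n' }
  map_zero' := by
    ext n
    show wedge 0 n = 0
    rw [wedge, TensorProduct.zero_tmul]; rfl
  map_add' := fun m m' => by
    ext n; exact wedge_add_left m m' n

@[simp] theorem wedgeBi_apply (m n : M) : wedgeBi m n = wedge m n := rfl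

theorem wedge_zero_left (n : M) : wedge (0 : M) n = 0 := by
  rw [← wedgeBi_apply, map_zero]; rfl

theorem wedge_zero_right (m : M) : wedge m (0 : M) = 0 :=
  map_zero (wedgeBi m)

theorem wedge_antisymm (m n : M) : wedge m n = - wedge n m := by
  have h := wedge_self (m + n)
  rw [wedge_add_left, wedge_add_right, wedge_add_right, wedge_self, wedge_self] at h
  rw [eq_neg_iff_add_eq_zero]
  linear_combination (norm := abel) h

theorem wedge_zsmul_left (z : ℤ) (m n : M) : wedge (z • m) n = z • wedge m n := by
  have := map_zsmul ((wedgeBi (M := M)).flip n) z m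
  exact this

theorem wedge_zsmul_right (z : ℤ) (m n : M) : wedge m (z • n) = z • wedge m n :=
  map_zsmul (wedgeBi m) z n

theorem wedge_nsmul_left (z : ℕ) (m n : M) : wedge (z • m) n = z • wedge m n := by
  have := map_nsmul ((wedgeBi (M := M)).flip n) z m
  exact this

theorem wedge_nsmul_right (z : ℕ) (m n : M) : wedge m (z • n) = z • wedge m n :=
  map_nsmul (wedgeBi m) z n

theorem wedge_sum_left {ι : Type*} (s : Finset ι) (a : ι → M) (y : M) :
    wedge (∑ i ∈ s, a i) y = ∑ i ∈ s, wedge (a i) y := by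
  calc wedge (∑ i ∈ s, a i) y = (wedgeBi (∑ i ∈ s, a i)) y := rfl
    _ = (∑ i ∈ s, wedgeBi (a i)) y := by rw [map_sum]
    _ = ∑ i ∈ s, wedge (a i) y := AddMonoidHom.finset_sum_apply _ _ _

theorem wedge_sum_right {ι : Type*} (s : Finset ι) (a : ι → M) (x : M) :
    wedge x (∑ i ∈ s, a i) = ∑ i ∈ s, wedge x (a i) :=
  map_sum (wedgeBi x) a s

/-- Lift an alternating bi-additive map to `Wedge2 M`. -/
def wedgeLift (b : M →+ M →+ N) (hb : ∀ m, b m m = 0) : Wedge2 M →+ N :=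
  (Submodule.liftQ (wedgeRel M)
    (TensorProduct.lift (LinearMap.mk₂ ℤ (fun x y => b x y)
      (fun x x' y => by simp)
      (fun z x y => by
        show b (z • x) y = z • b x y
        rw [map_zsmul]; rfl)
      (fun x y y' => by simp)
      (fun z x y => by
        show b x (z • y) = z • b x y
        rw [map_zsmul])))
    (by
      rw [wedgeRel, Submodule.span_le]
      rintro x ⟨m, rfl⟩
      exact (TensorProduct.lift.tmul m m).trans (hb m))).toAddMonoidHom

@[simp] theorem wedgeLift_wedge (b : M →+ M →+ N) (hb : ∀ m, b m m = 0) (m n : M) :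
    wedgeLift b hb (wedge m n) = b m n := by
  simp only [wedgeLift, wedge, LinearMap.toAddMonoidHom_coe, Submodule.liftQ_apply,
    TensorProduct.lift.tmul]
  rfl

theorem Wedge2.addHom_ext {g h : Wedge2 M →+ N}
    (H : ∀ m n : M, g (wedge m n) = h (wedge m n)) : g = h := by
  ext z
  obtain ⟨t, rfl⟩ := Submodule.Quotient.mk_surjective _ z
  induction t using TensorProduct.induction_on with
  | zero => exact (map_zero g).trans (map_zero h).symm
  | tmul x y => exact H x y
  | add x y hx hy =>
      rw [show (Submodule.Quotient.mk (x + y) : Wedge2 M)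
          = @id (Wedge2 M) (Submodule.Quotient.mk x) + @id (Wedge2 M) (Submodule.Quotient.mk y)
          from rfl, map_add, map_add]
      exact congrArg₂ (· + ·) hx hy

/-- Induction principle for `Wedge2`. -/
theorem Wedge2.induction {P : Wedge2 M → Prop} (zero : P 0)
    (wedge : ∀ m n : M, P (wedge m n)) (add : ∀ a b, P a → P b → P (a + b)) :
    ∀ z, P z := by
  intro z
  obtain ⟨t, rfl⟩ := Submodule.Quotient.mk_surjective _ z
  induction t using TensorProduct.induction_on with
  | zero => exact zero
  | tmul x y => exact wedge x y
  | add x y hx hy =>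
      rw [show (Submodule.Quotient.mk (x + y) : Wedge2 M)
          = Submodule.Quotient.mk x + Submodule.Quotient.mk y from rfl]
      exact add _ _ hx hy

/-- Every element of `Wedge2 M` is a finite sum of wedges. -/
theorem Wedge2.exists_list (z : Wedge2 M) :
    ∃ l : List (M × M), z = (l.map fun q => wedge q.1 q.2).sum := by
  obtain ⟨t, rfl⟩ := Submodule.Quotient.mk_surjective _ z
  induction t using TensorProduct.induction_on with
  | zero => exact ⟨[], rfl⟩
  | tmul x y => exact ⟨[(x, y)], by rw [List.map_singleton, List.sum_singleton]; rfl⟩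
  | add x y hx hy =>
      obtain ⟨l1, h1⟩ := hx
      obtain ⟨l2, h2⟩ := hy
      refine ⟨l1 ++ l2, ?_⟩
      rw [show (Submodule.Quotient.mk (x + y) : Wedge2 M)
          = Submodule.Quotient.mk x + Submodule.Quotient.mk y from rfl, h1, h2]
      simp
      rfl

end Wedge2API
section McAPI

variable (ℓ : ℕ) [hℓ : Fact ℓ.Prime]

theorem lpow_ne_zero (k : ℕ) : ℓ ^ k ≠ 0 :=
  pow_ne_zero k (Fact.out : ℓ.Prime).ne_zero

theorem lpow_pos_real (k : ℤ) : (0 : ℝ) < (ℓ : ℝ) ^ k :=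
  zpow_pos (by exact_mod_cast (Fact.out : ℓ.Prime).pos) _

/-- The reduction ring homomorphisms between the groups `Mc ℓ n`. -/
def redc : ∀ (m n : ℕ∞), n ≤ m → (Mc ℓ m →+* Mc ℓ n) :=
  ENat.recTopCoe
    (fun n => ENat.recTopCoe (C := fun n => n ≤ (⊤ : ℕ∞) → (Mc ℓ ⊤ →+* Mc ℓ n))
      (fun _ => RingHom.id ℤ_[ℓ]) (fun k _ => PadicInt.toZModPow k) n)
    (fun j n => ENat.recTopCoe (C := fun n => n ≤ (j : ℕ∞) → (Mc ℓ (j : ℕ∞) →+* Mc ℓ n))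
      (fun h => absurd h (by simp))
      (fun k h => ZMod.castHom (pow_dvd_pow ℓ (by exact_mod_cast h)) (ZMod (ℓ ^ k))) n)

theorem redc_coe_coe (j k : ℕ) (h : (k : ℕ∞) ≤ (j : ℕ∞)) :
    redc ℓ (j : ℕ∞) (k : ℕ∞) h =
      ZMod.castHom (pow_dvd_pow ℓ (by exact_mod_cast h)) (ZMod (ℓ ^ k)) := rfl

theorem redc_self (n : ℕ∞) (h : n ≤ n) (x : Mc ℓ n) : redc ℓ n n h x = x := by
  induction n using ENat.recTopCoe with
  | top => rfl
  | coe j =>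
      rw [redc_coe_coe]
      exact DFunLike.congr_fun (ZMod.castHom_self (n := ℓ ^ j)) x

theorem redc_redc {m n q : ℕ∞} (h1 : n ≤ m) (h2 : q ≤ n) (x : Mc ℓ m) :
    redc ℓ n q h2 (redc ℓ m n h1 x) = redc ℓ m q (h2.trans h1) x := by
  induction q using ENat.recTopCoe with
  | top =>
      rw [top_le_iff] at h2; subst h2
      rw [top_le_iff] at h1; subst h1
      rfl
  | coe kq =>
    induction n using ENat.recTopCoe with
    | top =>
        rw [top_le_iff] at h1; subst h1
        rfl
    | coe kn =>
      induction m using ENat.recTopCoe with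
      | top =>
          exact DFunLike.congr_fun
            (PadicInt.zmod_cast_comp_toZModPow kq kn (by exact_mod_cast h2)) x
      | coe km =>
          exact DFunLike.congr_fun
            (ZMod.castHom_comp (pow_dvd_pow ℓ (by exact_mod_cast h2))
              (pow_dvd_pow ℓ (by exact_mod_cast h1))) x

/-- The `red` of the statement agrees with `redc`. -/
theorem red_eq_redc {m n : ℕ∞} (h : n ≤ m) (x : Mc ℓ m) :
    red ℓ m n x = redc ℓ m n h x := by
  induction n using ENat.recTopCoe with
  | top =>
      rw [top_le_iff] at h; subst h
      rfl
  | coe k =>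
    induction m using ENat.recTopCoe with
    | top => rfl
    | coe j => rfl

theorem Mc.ext {n : ℕ∞} {x y : Mc ℓ n}
    (h : ∀ (k : ℕ) (hk : (k : ℕ∞) ≤ n), redc ℓ n k hk x = redc ℓ n k hk y) : x = y := by
  induction n using ENat.recTopCoe with
  | top => exact PadicInt.ext_of_toZModPow.mp fun k => h k le_top
  | coe j =>
      have := h j le_rfl
      rwa [redc_self, redc_self] at this

theorem padic_limit (c : ∀ k : ℕ, ZMod (ℓ ^ k))
    (hc : ∀ (k1 k2 : ℕ) (h : k1 ≤ k2),
      ZMod.castHom (pow_dvd_pow ℓ h) (ZMod (ℓ ^ k1)) (c k2) = c k1) :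
    ∃ x : ℤ_[ℓ], ∀ k : ℕ, PadicInt.toZModPow k x = c k := by
  set F : ∀ k : ℕ, Polynomial ℤ →+* ZMod (ℓ ^ k) :=
    fun k => Polynomial.eval₂RingHom (Int.castRingHom _) (c k) with hF
  have hFX : ∀ k, F k Polynomial.X = c k := fun k => by simp [hF]
  have Fcomp : ∀ (k1 k2 : ℕ) (hk : k1 ≤ k2),
      (ZMod.castHom (pow_dvd_pow ℓ hk) (ZMod (ℓ ^ k1))).comp (F k2) = F k1 := by
    intro k1 k2 hk
    apply Polynomial.ringHom_ext
    · intro a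
      simp [hF]
    · rw [RingHom.comp_apply, hFX, hFX]
      exact hc k1 k2 hk
  refine ⟨PadicInt.lift Fcomp Polynomial.X, fun k => ?_⟩
  have := DFunLike.congr_fun (PadicInt.lift_spec Fcomp k) Polynomial.X
  rw [RingHom.comp_apply] at this
  rw [this, hFX]

/-- `Mc ℓ n` is the inverse limit of its finite reductions. -/
theorem Mc.limit (n : ℕ∞) (c : ∀ k : ℕ, (k : ℕ∞) ≤ n → Mc ℓ (k : ℕ∞))
    (hc : ∀ (k k' : ℕ) (hkk' : k ≤ k') (h' : (k' : ℕ∞) ≤ n),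
      redc ℓ (k' : ℕ∞) (k : ℕ∞) (by exact_mod_cast hkk') (c k' h')
        = c k ((by exact_mod_cast hkk' : (k : ℕ∞) ≤ (k' : ℕ∞)).trans h')) :
    ∃ x : Mc ℓ n, ∀ (k : ℕ) (hk : (k : ℕ∞) ≤ n), redc ℓ n (k : ℕ∞) hk x = c k hk := by
  induction n using ENat.recTopCoe with
  | coe j =>
      refine ⟨c j le_rfl, fun k hk => ?_⟩
      exact hc k j (by exact_mod_cast hk) le_rfl
  | top =>
      obtain ⟨x, hx⟩ := padic_limit ℓ (fun k => c k le_top)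
        (fun k1 k2 h => hc k1 k2 h le_top)
      exact ⟨x, fun k _ => hx k⟩

instance (k : ℕ) : DiscreteTopology (Mc ℓ (k : ℕ∞)) :=
  inferInstanceAs (DiscreteTopology (ZMod (ℓ ^ k)))

instance (n : ℕ∞) : T2Space (Mc ℓ n) := by
  induction n using ENat.recTopCoe with
  | top => exact inferInstanceAs (T2Space ℤ_[ℓ])
  | coe k => exact inferInstanceAs (T2Space (ZMod (ℓ ^ k)))

theorem continuous_toZModPow (k : ℕ) :
    Continuous (PadicInt.toZModPow (p := ℓ) k) := by
  rw [continuous_iff_continuousAt]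
  intro x
  have hev : (fun y => PadicInt.toZModPow (p := ℓ) k y)
      =ᶠ[nhds x] (fun _ => PadicInt.toZModPow k x) := by
    have hb : Metric.closedBall x ((ℓ : ℝ) ^ (-(k : ℤ))) ∈ nhds x :=
      Metric.closedBall_mem_nhds x (lpow_pos_real ℓ _)
    filter_upwards [hb] with y hy
    rw [Metric.mem_closedBall, dist_eq_norm] at hy
    have : y - x ∈ RingHom.ker (PadicInt.toZModPow (p := ℓ) k) := by
      rw [PadicInt.ker_toZModPow]
      exact (PadicInt.norm_le_pow_iff_mem_span_pow _ k).mp hy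
    rw [RingHom.mem_ker, map_sub, sub_eq_zero] at this
    exact this
  rw [ContinuousAt]
  exact Filter.Tendsto.congr' hev.symm tendsto_const_nhds

theorem padic_continuous_of {X : Type*} [TopologicalSpace X] (g : X → ℤ_[ℓ])
    (h : ∀ k : ℕ, Continuous fun x => PadicInt.toZModPow k (g x)) : Continuous g := by
  rw [continuous_iff_continuousAt]
  intro x
  rw [ContinuousAt, Metric.tendsto_nhds]
  intro ε hε
  obtain ⟨k, hk⟩ := PadicInt.exists_pow_neg_lt ℓ hε
  have hopen : IsOpen ((fun y : X => PadicInt.toZModPow k (g y)) ⁻¹' {PadicInt.toZModPow k (g x)}) :=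
    IsOpen.preimage (h k) (isOpen_discrete _)
  filter_upwards [hopen.mem_nhds (by simp)] with y hy
  rw [Set.mem_preimage, Set.mem_singleton_iff] at hy
  rw [dist_eq_norm]
  calc ‖g y - g x‖ ≤ (ℓ : ℝ) ^ (-(k : ℤ)) := by
        rw [PadicInt.norm_le_pow_iff_mem_span_pow, ← PadicInt.ker_toZModPow,
          RingHom.mem_ker, map_sub, sub_eq_zero]
        exact hy
    _ < ε := hk

theorem padic_exists_ker {O : Set ℤ_[ℓ]} (hO : IsOpen O) (h0 : (0 : ℤ_[ℓ]) ∈ O) :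
    ∃ k : ℕ, {x : ℤ_[ℓ] | PadicInt.toZModPow k x = 0} ⊆ O := by
  obtain ⟨ε, hε, hball⟩ := Metric.isOpen_iff.mp hO 0 h0
  obtain ⟨k, hk⟩ := PadicInt.exists_pow_neg_lt ℓ hε
  refine ⟨k, fun x hx => hball ?_⟩
  rw [Metric.mem_ball, dist_zero_right]
  rw [Set.mem_setOf_eq] at hx
  calc ‖x‖ ≤ (ℓ : ℝ) ^ (-(k : ℤ)) := by
        rw [PadicInt.norm_le_pow_iff_mem_span_pow, ← PadicInt.ker_toZModPow, RingHom.mem_ker]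
        exact hx
    _ < ε := hk

theorem continuous_redc {m n : ℕ∞} (h : n ≤ m) : Continuous (redc ℓ m n h) := by
  induction n using ENat.recTopCoe with
  | top =>
      rw [top_le_iff] at h; subst h
      exact continuous_id
  | coe k =>
    induction m using ENat.recTopCoe with
    | top => exact continuous_toZModPow ℓ k
    | coe j => exact continuous_of_discreteTopology

/-- A map into `Mc ℓ n` all whose finite reductions are continuous is continuous. -/
theorem Mc.continuous_of_redc {X : Type*} [TopologicalSpace X] {n : ℕ∞} {g : X → Mc ℓ n}
    (h : ∀ (k : ℕ) (hk : (k : ℕ∞) ≤ n), Continuous fun x => redc ℓ n k hk (g x)) :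
    Continuous g := by
  induction n using ENat.recTopCoe with
  | coe j =>
      have := h j le_rfl
      simpa only [redc_self] using this
  | top => exact padic_continuous_of ℓ g fun k => h k le_top

/-- Open neighbourhoods of `0` in `Mc ℓ n` contain the kernel of a finite reduction. -/
theorem Mc.exists_ker_subset {n : ℕ∞} {O : Set (Mc ℓ n)} (hO : IsOpen O) (h0 : (0 : Mc ℓ n) ∈ O) :
    ∃ (k : ℕ) (hk : (k : ℕ∞) ≤ n), {x : Mc ℓ n | redc ℓ n k hk x = 0} ⊆ O := by
  induction n using ENat.recTopCoe with
  | coe j =>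
      refine ⟨j, le_rfl, fun x hx => ?_⟩
      rw [Set.mem_setOf_eq, redc_self] at hx
      rwa [hx]
  | top =>
      obtain ⟨k, hk⟩ := padic_exists_ker ℓ hO h0
      exact ⟨k, le_top, hk⟩

end McAPI
set_option linter.unusedSectionVars false

section MainAPI

variable (ℓ : ℕ) [hℓ : Fact ℓ.Prime] (Ω : Type) [LinearOrder Ω] (f : Ω → ℕ∞)

/-- truncation of an extended level to a finite level. -/
def trn (n : ℕ∞) (k : ℕ) : ℕ := (min n (k : ℕ∞)).toNat

theorem trn_coe (n : ℕ∞) (k : ℕ) : ((trn n k : ℕ) : ℕ∞) = min n (k : ℕ∞) :=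
  ENat.coe_toNat (ne_top_of_le_ne_top (ENat.coe_ne_top k) (min_le_right _ _))

theorem trn_le (n : ℕ∞) (k : ℕ) : ((trn n k : ℕ) : ℕ∞) ≤ n := by
  rw [trn_coe]; exact min_le_left _ _

theorem trn_le_k (n : ℕ∞) (k : ℕ) : trn n k ≤ k := by
  have h := (trn_coe n k).le.trans (min_le_right n (k : ℕ∞))
  exact_mod_cast h

theorem trn_mono (n : ℕ∞) {k k' : ℕ} (h : k ≤ k') : trn n k ≤ trn n k' := by
  have h1 : min n (k : ℕ∞) ≤ min n (k' : ℕ∞) := min_le_min le_rfl (by exact_mod_cast h)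
  have := (trn_coe n k).le.trans (h1.trans (trn_coe n k').ge)
  exact_mod_cast this

theorem trn_eq_of_le {n : ℕ∞} {k : ℕ} (h : (k : ℕ∞) ≤ n) : trn n k = k := by
  have : ((trn n k : ℕ) : ℕ∞) = (k : ℕ∞) := by rw [trn_coe, min_eq_right h]
  exact_mod_cast this

theorem le_trn {n : ℕ∞} {m k : ℕ} (h1 : (m : ℕ∞) ≤ n) (h2 : m ≤ k) : m ≤ trn n k := by
  have : ((m : ℕ∞)) ≤ ((trn n k : ℕ) : ℕ∞) := by
    rw [trn_coe]; exact le_min h1 (by exact_mod_cast h2)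
  exact_mod_cast this

theorem trn_mono_left {n n' : ℕ∞} (h : n ≤ n') (k : ℕ) : trn n k ≤ trn n' k :=
  le_trn ((trn_le n k).trans h) (trn_le_k n k)

theorem trn_min (n n' : ℕ∞) (k : ℕ) : trn (min n n') k = min (trn n k) (trn n' k) := by
  apply le_antisymm
  · exact le_min (trn_mono_left (min_le_left _ _) k) (trn_mono_left (min_le_right _ _) k)
  · exact le_trn (le_min ((Nat.cast_le.mpr (min_le_left _ _)).trans (trn_le n k))
      ((Nat.cast_le.mpr (min_le_right _ _)).trans (trn_le n' k)))
      ((min_le_left _ _).trans (trn_le_k n k))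

/-- The element of `A` supported at `v` with value `c`. -/
def eA (v : Ω) (c : Mc ℓ (f v)) : A ℓ Ω f := Pi.single v c

@[simp] theorem eA_same (v : Ω) (c : Mc ℓ (f v)) : eA ℓ Ω f v c v = c := by
  exact Pi.single_eq_same (M := fun w => Mc ℓ (f w)) v c

theorem eA_ne (v w : Ω) (c : Mc ℓ (f v)) (h : v ≠ w) : eA ℓ Ω f v c w = 0 := by
  exact Pi.single_eq_of_ne (M := fun w => Mc ℓ (f w)) (Ne.symm h) c

/-- The basic open subgroup of `A`: congruence conditions at level `k` on the
coordinates in `S`. -/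
def USk (S : Finset Ω) (k : ℕ) : AddSubgroup (A ℓ Ω f) where
  carrier := {x | ∀ v ∈ S, redc ℓ (f v) (trn (f v) k) (trn_le _ _) (x v) = 0}
  zero_mem' := fun v _ => by simp
  add_mem' := by
    intro a b ha hb v hv
    simp only [Pi.add_apply, map_add, ha v hv, hb v hv, add_zero]
  neg_mem' := by
    intro a ha v hv
    simp only [Pi.neg_apply, map_neg, ha v hv, neg_zero]

theorem mem_USk {S : Finset Ω} {k : ℕ} {x : A ℓ Ω f} :
    x ∈ USk ℓ Ω f S k ↔ ∀ v ∈ S, redc ℓ (f v) (trn (f v) k) (trn_le _ _) (x v) = 0 :=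
  Iff.rfl

theorem USk_spec {S : Finset Ω} {k : ℕ} {x : A ℓ Ω f} (h : x ∈ USk ℓ Ω f S k) {v : Ω}
    (hv : v ∈ S) {m : ℕ} (hm1 : (m : ℕ∞) ≤ f v) (hm2 : m ≤ k) :
    redc ℓ (f v) (m : ℕ∞) hm1 (x v) = 0 := by
  have hle : (m : ℕ∞) ≤ ((trn (f v) k : ℕ) : ℕ∞) := by
    exact_mod_cast Nat.cast_le.mpr (le_trn hm1 hm2)
  rw [← redc_redc ℓ (trn_le (f v) k) hle (x v), h v hv, map_zero]

theorem USk_anti {S S' : Finset Ω} {k k' : ℕ} (hS : S ⊆ S') (hk : k ≤ k') :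
    USk ℓ Ω f S' k' ≤ USk ℓ Ω f S k := by
  intro x hx v hv
  exact USk_spec ℓ Ω f hx (hS hv) (trn_le _ _) ((trn_le_k _ _).trans hk)

theorem isOpen_USk (S : Finset Ω) (k : ℕ) : IsOpen ((USk ℓ Ω f S k : Set (A ℓ Ω f))) := by
  have : ((USk ℓ Ω f S k : Set (A ℓ Ω f)))
      = Set.pi ↑S (fun v => (redc ℓ (f v) (trn (f v) k) (trn_le _ _)) ⁻¹' {0}) := by
    ext x
    simp [Set.mem_pi, mem_USk, SetLike.mem_coe]
  rw [this]
  exact isOpen_set_pi S.finite_toSet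
    (fun v _ => (continuous_redc ℓ _).isOpen_preimage _ (isOpen_discrete _))

/-- `USk S k` as an open subgroup. -/
def oUSk (S : Finset Ω) (k : ℕ) : OpenSub (A ℓ Ω f) := ⟨USk ℓ Ω f S k, isOpen_USk ℓ Ω f S k⟩

/-- Cofinality: every open subgroup contains a `USk S k`. -/
theorem exists_USk_le (U : OpenSub (A ℓ Ω f)) :
    ∃ (S : Finset Ω) (k : ℕ), USk ℓ Ω f S k ≤ U.1 := by
  obtain ⟨S, u, hu, hsub⟩ := (isOpen_pi_iff.mp U.2) 0 U.1.zero_mem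
  -- for each coordinate in S pick a level
  have : ∀ v : Ω, v ∈ S → ∃ k : ℕ, ∃ hk : ((k : ℕ∞) ≤ f v),
      {c : Mc ℓ (f v) | redc ℓ (f v) k hk c = 0} ⊆ u v := by
    intro v hv
    obtain ⟨k, hk, hker⟩ := Mc.exists_ker_subset ℓ (hu v hv).1 (by simpa using (hu v hv).2)
    exact ⟨k, hk, hker⟩
  choose kv hkv hker using this
  refine ⟨S, S.attach.sup (fun v => kv v.1 v.2), fun x hx => ?_⟩
  apply hsub
  intro v hv
  refine hker v hv ?_
  exact USk_spec ℓ Ω f hx hv (hkv v hv)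
    (Finset.le_sup (f := fun v : {x // x ∈ S} => kv v.1 v.2) (Finset.mem_attach S ⟨v, hv⟩))

end MainAPI
section DetAPI

variable (ℓ : ℕ) [hℓ : Fact ℓ.Prime] (Ω : Type) [LinearOrder Ω] (f : Ω → ℕ∞)

/-- The index type of the target product. -/
abbrev PP : Type := {p : Ω × Ω // p.1 < p.2}

/-- `f(v,w) = min (f v) (f w)`. -/
abbrev np (p : PP Ω) : ℕ∞ := min (f p.1.1) (f p.1.2)

theorem np_le_left (p : PP Ω) : np Ω f p ≤ f p.1.1 := min_le_left _ _
theorem np_le_right (p : PP Ω) : np Ω f p ≤ f p.1.2 := min_le_right _ _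

/-- The pair `{v, w}` as a finset. -/
def Sp (p : PP Ω) : Finset Ω := {p.1.1, p.1.2}

theorem vp_mem_Sp (p : PP Ω) : p.1.1 ∈ Sp Ω p := Finset.mem_insert_self _ _
theorem wp_mem_Sp (p : PP Ω) : p.1.2 ∈ Sp Ω p :=
  Finset.mem_insert_of_mem (Finset.mem_singleton_self _)

/-- The 2×2 determinant, as a bi-additive map on `A` with values at level `m`. -/
def dA (p : PP Ω) (m : ℕ) (hm : (m : ℕ∞) ≤ np Ω f p) : A ℓ Ω f →+ A ℓ Ω f →+ Mc ℓ (m : ℕ∞) :=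
  AddMonoidHom.mk' (fun x => AddMonoidHom.mk'
    (fun y => redc ℓ (f p.1.1) m (hm.trans (np_le_left Ω f p)) (x p.1.1)
        * redc ℓ (f p.1.2) m (hm.trans (np_le_right Ω f p)) (y p.1.2)
      - redc ℓ (f p.1.2) m (hm.trans (np_le_right Ω f p)) (x p.1.2)
        * redc ℓ (f p.1.1) m (hm.trans (np_le_left Ω f p)) (y p.1.1))
    (fun y y' => by simp only [Pi.add_apply, map_add]; ring))
  (fun x x' => by
    apply AddMonoidHom.ext
    intro y
    simp only [AddMonoidHom.mk'_apply, AddMonoidHom.add_apply, Pi.add_apply, map_add]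
    ring)

theorem dA_apply (p : PP Ω) (m : ℕ) (hm : (m : ℕ∞) ≤ np Ω f p) (x y : A ℓ Ω f) :
    dA ℓ Ω f p m hm x y
      = redc ℓ (f p.1.1) m (hm.trans (np_le_left Ω f p)) (x p.1.1)
          * redc ℓ (f p.1.2) m (hm.trans (np_le_right Ω f p)) (y p.1.2)
        - redc ℓ (f p.1.2) m (hm.trans (np_le_right Ω f p)) (x p.1.2)
          * redc ℓ (f p.1.1) m (hm.trans (np_le_left Ω f p)) (y p.1.1) := rfl

theorem dA_left_zero (p : PP Ω) (m : ℕ) (hm : (m : ℕ∞) ≤ np Ω f p) {U : AddSubgroup (A ℓ Ω f)}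
    (hU : U ≤ USk ℓ Ω f (Sp Ω p) m) {u : A ℓ Ω f} (hu : u ∈ U) (y : A ℓ Ω f) :
    dA ℓ Ω f p m hm u y = 0 := by
  rw [dA_apply,
    USk_spec ℓ Ω f (hU hu) (vp_mem_Sp Ω p) (hm.trans (np_le_left Ω f p)) le_rfl,
    USk_spec ℓ Ω f (hU hu) (wp_mem_Sp Ω p) (hm.trans (np_le_right Ω f p)) le_rfl]
  ring

theorem dA_right_zero (p : PP Ω) (m : ℕ) (hm : (m : ℕ∞) ≤ np Ω f p) {U : AddSubgroup (A ℓ Ω f)}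
    (hU : U ≤ USk ℓ Ω f (Sp Ω p) m) {u : A ℓ Ω f} (hu : u ∈ U) (x : A ℓ Ω f) :
    dA ℓ Ω f p m hm x u = 0 := by
  rw [dA_apply,
    USk_spec ℓ Ω f (hU hu) (vp_mem_Sp Ω p) (hm.trans (np_le_left Ω f p)) le_rfl,
    USk_spec ℓ Ω f (hU hu) (wp_mem_Sp Ω p) (hm.trans (np_le_right Ω f p)) le_rfl]
  ring

/-- The determinant descends to the quotient `A ⧸ U` for `U ≤ USk {v,w} m`. -/
def dQ (p : PP Ω) (m : ℕ) (hm : (m : ℕ∞) ≤ np Ω f p) (U : AddSubgroup (A ℓ Ω f))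
    (hU : U ≤ USk ℓ Ω f (Sp Ω p) m) :
    (A ℓ Ω f ⧸ U) →+ (A ℓ Ω f ⧸ U) →+ Mc ℓ (m : ℕ∞) :=
  QuotientAddGroup.lift U
    (AddMonoidHom.mk' (fun x => QuotientAddGroup.lift U (dA ℓ Ω f p m hm x)
        (fun u hu => dA_right_zero ℓ Ω f p m hm hU hu x))
      (fun x x' => by
        apply AddMonoidHom.ext
        intro yq
        induction yq using QuotientAddGroup.induction_on with
        | H y => simp only [AddMonoidHom.mk'_apply, QuotientAddGroup.lift_mk,
            AddMonoidHom.add_apply, map_add]; rfl))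
    (by
      intro u hu
      apply AddMonoidHom.ext
      intro yq
      induction yq using QuotientAddGroup.induction_on with
      | H y =>
          simp only [AddMonoidHom.mk'_apply, QuotientAddGroup.lift_mk, AddMonoidHom.zero_apply]
          exact dA_left_zero ℓ Ω f p m hm hU hu y)

theorem dQ_mk (p : PP Ω) (m : ℕ) (hm : (m : ℕ∞) ≤ np Ω f p) (U : AddSubgroup (A ℓ Ω f))
    (hU : U ≤ USk ℓ Ω f (Sp Ω p) m) (x y : A ℓ Ω f) :
    dQ ℓ Ω f p m hm U hU ((x : A ℓ Ω f ⧸ U)) ((y : A ℓ Ω f ⧸ U)) = dA ℓ Ω f p m hm x y := rfl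

/-- The determinant on the exterior square of `A ⧸ U`. -/
def Dk (p : PP Ω) (m : ℕ) (hm : (m : ℕ∞) ≤ np Ω f p) (U : AddSubgroup (A ℓ Ω f))
    (hU : U ≤ USk ℓ Ω f (Sp Ω p) m) :
    Wedge2 (A ℓ Ω f ⧸ U) →+ Mc ℓ (m : ℕ∞) :=
  wedgeLift (dQ ℓ Ω f p m hm U hU) (by
    intro zq
    induction zq using QuotientAddGroup.induction_on with
    | H z =>
        rw [dQ_mk, dA_apply]
        ring)

theorem Dk_wedge (p : PP Ω) (m : ℕ) (hm : (m : ℕ∞) ≤ np Ω f p) (U : AddSubgroup (A ℓ Ω f))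
    (hU : U ≤ USk ℓ Ω f (Sp Ω p) m) (x y : A ℓ Ω f) :
    Dk ℓ Ω f p m hm U hU (wedge (x : A ℓ Ω f ⧸ U) (y : A ℓ Ω f ⧸ U)) = dA ℓ Ω f p m hm x y := by
  rw [Dk, wedgeLift_wedge, dQ_mk]

theorem transMap_wedge {G : Type*} [AddCommGroup G] [TopologicalSpace G]
    {U V : OpenSub G} (h : U.1 ≤ V.1) (x y : G) :
    transMap G h (wedge (x : G ⧸ U.1) (y : G ⧸ U.1)) = wedge (x : G ⧸ V.1) (y : G ⧸ V.1) := by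
  rw [transMap, wedgeMap_wedge]
  simp [QuotientAddGroup.map_mk]

theorem Dk_trans (p : PP Ω) (m : ℕ) (hm : (m : ℕ∞) ≤ np Ω f p) {U V : OpenSub (A ℓ Ω f)}
    (hUV : U.1 ≤ V.1) (hU : U.1 ≤ USk ℓ Ω f (Sp Ω p) m) (hV : V.1 ≤ USk ℓ Ω f (Sp Ω p) m)
    (z : Wedge2 (A ℓ Ω f ⧸ U.1)) :
    Dk ℓ Ω f p m hm V.1 hV (transMap (A ℓ Ω f) hUV z) = Dk ℓ Ω f p m hm U.1 hU z := by
  induction z using Wedge2.induction with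
  | zero => simp
  | add a b ha hb => rw [map_add, map_add, map_add, ha, hb]
  | wedge xq yq =>
    induction xq using QuotientAddGroup.induction_on with
    | H x =>
      induction yq using QuotientAddGroup.induction_on with
      | H y => rw [transMap_wedge, Dk_wedge, Dk_wedge]

theorem Dk_red (p : PP Ω) {m m' : ℕ} (hmm : m ≤ m') (hm : (m : ℕ∞) ≤ np Ω f p)
    (hm' : (m' : ℕ∞) ≤ np Ω f p) {U : AddSubgroup (A ℓ Ω f)}
    (hU' : U ≤ USk ℓ Ω f (Sp Ω p) m') (hU : U ≤ USk ℓ Ω f (Sp Ω p) m)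
    (z : Wedge2 (A ℓ Ω f ⧸ U)) :
    redc ℓ (m' : ℕ∞) (m : ℕ∞) (by exact_mod_cast hmm) (Dk ℓ Ω f p m' hm' U hU' z)
      = Dk ℓ Ω f p m hm U hU z := by
  induction z using Wedge2.induction with
  | zero => simp
  | add a b ha hb => rw [map_add, map_add, map_add, ha, hb]
  | wedge xq yq =>
    induction xq using QuotientAddGroup.induction_on with
    | H x =>
      induction yq using QuotientAddGroup.induction_on with
      | H y =>
          rw [Dk_wedge, Dk_wedge, dA_apply, dA_apply, map_sub, map_mul, map_mul]
          rw [redc_redc, redc_redc, redc_redc, redc_redc]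

end DetAPI
section PsiAPI

variable (ℓ : ℕ) [hℓ : Fact ℓ.Prime] (Ω : Type) [LinearOrder Ω] (f : Ω → ℕ∞)

theorem Dk_compat (z : ProfWedge2 (A ℓ Ω f)) (p : PP Ω) {m k : ℕ} (hmk : m ≤ k)
    (hm : (m : ℕ∞) ≤ np Ω f p) (hk : (k : ℕ∞) ≤ np Ω f p) :
    redc ℓ (k : ℕ∞) (m : ℕ∞) (by exact_mod_cast hmk)
      (Dk ℓ Ω f p k hk (USk ℓ Ω f (Sp Ω p) k) le_rfl (z.1 (oUSk ℓ Ω f (Sp Ω p) k)))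
      = Dk ℓ Ω f p m hm (USk ℓ Ω f (Sp Ω p) m) le_rfl (z.1 (oUSk ℓ Ω f (Sp Ω p) m)) := by
  have hUk_le_m : USk ℓ Ω f (Sp Ω p) k ≤ USk ℓ Ω f (Sp Ω p) m :=
    USk_anti ℓ Ω f (subset_refl _) hmk
  refine (Dk_red ℓ Ω f p hmk hm hk le_rfl hUk_le_m _).trans ?_
  rw [← z.2 (oUSk ℓ Ω f (Sp Ω p) k) (oUSk ℓ Ω f (Sp Ω p) m) hUk_le_m]
  exact (Dk_trans ℓ Ω f p m hm (U := oUSk ℓ Ω f (Sp Ω p) k) (V := oUSk ℓ Ω f (Sp Ω p) m)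
    hUk_le_m hUk_le_m le_rfl (z.1 (oUSk ℓ Ω f (Sp Ω p) k))).symm

/-- Auxiliary construction of the coordinates of `ψ`. -/
def psiAux (z : ProfWedge2 (A ℓ Ω f)) (p : PP Ω) : ∀ (n : ℕ∞), np Ω f p = n → Mc ℓ n :=
  ENat.recTopCoe
    (fun e => Classical.choose (padic_limit ℓ
      (fun k => Dk ℓ Ω f p k (by rw [e]; exact le_top) (USk ℓ Ω f (Sp Ω p) k) le_rfl
        (z.1 (oUSk ℓ Ω f (Sp Ω p) k)))
      (fun k1 k2 h => Dk_compat ℓ Ω f z p h (by rw [e]; exact le_top) (by rw [e]; exact le_top))))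
    (fun j e => Dk ℓ Ω f p j e.ge (USk ℓ Ω f (Sp Ω p) j) le_rfl
      (z.1 (oUSk ℓ Ω f (Sp Ω p) j)))

theorem psiAux_spec (z : ProfWedge2 (A ℓ Ω f)) (p : PP Ω) :
    ∀ (n : ℕ∞) (e : np Ω f p = n) (m : ℕ) (hm : (m : ℕ∞) ≤ n),
      redc ℓ n (m : ℕ∞) hm (psiAux ℓ Ω f z p n e)
        = Dk ℓ Ω f p m (hm.trans e.ge) (USk ℓ Ω f (Sp Ω p) m) le_rfl
            (z.1 (oUSk ℓ Ω f (Sp Ω p) m)) := by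
  intro n
  induction n using ENat.recTopCoe with
  | top =>
      intro e m hm
      exact Classical.choose_spec (padic_limit ℓ
        (fun k => Dk ℓ Ω f p k (by rw [e]; exact le_top) (USk ℓ Ω f (Sp Ω p) k) le_rfl
          (z.1 (oUSk ℓ Ω f (Sp Ω p) k)))
        (fun k1 k2 h => Dk_compat ℓ Ω f z p h (by rw [e]; exact le_top)
          (by rw [e]; exact le_top))) m
  | coe j =>
      intro e m hm
      exact Dk_compat ℓ Ω f z p (by exact_mod_cast hm) (hm.trans e.ge) e.ge

/-- The coordinates of `ψ`. -/
def psiEl (z : ProfWedge2 (A ℓ Ω f)) (p : PP Ω) : Mc ℓ (np Ω f p) :=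
  psiAux ℓ Ω f z p (np Ω f p) rfl

theorem psiEl_spec (z : ProfWedge2 (A ℓ Ω f)) (p : PP Ω) (m : ℕ)
    (hm : (m : ℕ∞) ≤ np Ω f p) :
    redc ℓ (np Ω f p) (m : ℕ∞) hm (psiEl ℓ Ω f z p)
      = Dk ℓ Ω f p m hm (USk ℓ Ω f (Sp Ω p) m) le_rfl (z.1 (oUSk ℓ Ω f (Sp Ω p) m)) :=
  psiAux_spec ℓ Ω f z p (np Ω f p) rfl m hm

/-- The homomorphism `ψ`. -/
def psiHom : ProfWedge2 (A ℓ Ω f) →+ T ℓ Ω f :=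
  AddMonoidHom.mk' (fun z => fun p => psiEl ℓ Ω f z p) (by
    intro z z'
    funext p
    apply Mc.ext ℓ
    intro k hk
    rw [Pi.add_apply, map_add, psiEl_spec, psiEl_spec, psiEl_spec,
      show ((z + z').1 (oUSk ℓ Ω f (Sp Ω p) k))
        = z.1 (oUSk ℓ Ω f (Sp Ω p) k) + z'.1 (oUSk ℓ Ω f (Sp Ω p) k) from rfl]; exact map_add _ _ _)

theorem psiHom_apply (z : ProfWedge2 (A ℓ Ω f)) (p : PP Ω) :
    psiHom ℓ Ω f z p = psiEl ℓ Ω f z p := rfl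

theorem psiHom_continuous : Continuous (psiHom ℓ Ω f) := by
  apply continuous_pi
  intro p
  apply Mc.continuous_of_redc ℓ
  intro k hk
  have : (fun z : ProfWedge2 (A ℓ Ω f) => redc ℓ (np Ω f p) (k : ℕ∞) hk (psiHom ℓ Ω f z p))
      = fun z : ProfWedge2 (A ℓ Ω f) =>
          Dk ℓ Ω f p k hk (USk ℓ Ω f (Sp Ω p) k) le_rfl (z.1 (oUSk ℓ Ω f (Sp Ω p) k)) :=
    funext fun z => psiEl_spec ℓ Ω f z p k hk
  rw [this]
  exact continuous_bot.comp ((continuous_apply _).comp continuous_subtype_val)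

theorem psiHom_wedge (x y : A ℓ Ω f) :
    psiHom ℓ Ω f (bUniv (A ℓ Ω f) x y) = detF ℓ Ω f x y := by
  funext p
  apply Mc.ext ℓ
  intro k hk
  rw [psiHom_apply, psiEl_spec, show ((bUniv (A ℓ Ω f) x y).1 (oUSk ℓ Ω f (Sp Ω p) k))
      = wedge (x : A ℓ Ω f ⧸ USk ℓ Ω f (Sp Ω p) k) (y : A ℓ Ω f ⧸ USk ℓ Ω f (Sp Ω p) k)
      from rfl, Dk_wedge, dA_apply]
  rw [show detF ℓ Ω f x y p
      = red ℓ (f p.1.1) (np Ω f p) (x p.1.1) * red ℓ (f p.1.2) (np Ω f p) (y p.1.2)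
        - red ℓ (f p.1.2) (np Ω f p) (x p.1.2) * red ℓ (f p.1.1) (np Ω f p) (y p.1.1) from rfl]
  rw [red_eq_redc ℓ (np_le_left Ω f p), red_eq_redc ℓ (np_le_right Ω f p),
    red_eq_redc ℓ (np_le_right Ω f p), red_eq_redc ℓ (np_le_left Ω f p)]
  rw [map_sub, map_mul, map_mul, redc_redc, redc_redc, redc_redc, redc_redc]

end PsiAPI
section FiniteLevel

variable (ℓ : ℕ) [hℓ : Fact ℓ.Prime] (Ω : Type) [LinearOrder Ω] (f : Ω → ℕ∞)

/-- `val` of an element of a finite-level group. -/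
def mval {t : ℕ} (c : Mc ℓ ((t : ℕ) : ℕ∞)) : ℕ := ZMod.val (show ZMod (ℓ ^ t) from c)

theorem mval_redc {s t : ℕ} (hst : s ≤ t) (c : Mc ℓ ((t : ℕ) : ℕ∞)) :
    ((mval ℓ c : ℕ) : Mc ℓ ((s : ℕ) : ℕ∞)) = redc ℓ (t : ℕ∞) (s : ℕ∞) (by exact_mod_cast hst) c := by
  haveI : NeZero (ℓ ^ t) := ⟨lpow_ne_zero ℓ t⟩
  show ((ZMod.val _ : ℕ) : ZMod (ℓ ^ s)) = ZMod.castHom (pow_dvd_pow ℓ hst) (ZMod (ℓ ^ s)) _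
  exact ZMod.natCast_val (show ZMod (ℓ ^ t) from c)

theorem mval_natCast_self {t : ℕ} (c : Mc ℓ ((t : ℕ) : ℕ∞)) :
    ((mval ℓ c : ℕ) : Mc ℓ ((t : ℕ) : ℕ∞)) = c := by
  haveI : NeZero (ℓ ^ t) := ⟨lpow_ne_zero ℓ t⟩
  exact ZMod.natCast_rightInverse (show ZMod (ℓ ^ t) from c)

theorem mval_zero (t : ℕ) : mval ℓ (0 : Mc ℓ ((t : ℕ) : ℕ∞)) = 0 := by
  haveI : NeZero (ℓ ^ t) := ⟨lpow_ne_zero ℓ t⟩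
  exact ZMod.val_zero

theorem nsmul_mod {G : Type*} [AddCommGroup G] (g : G) {n : ℕ} (hg : n • g = 0) (a : ℕ) :
    a • g = (a % n) • g := by
  conv_lhs => rw [← Nat.div_add_mod a n]
  rw [add_nsmul, mul_comm, mul_smul, hg, smul_zero, zero_add]

theorem nsmul_congr {G : Type*} [AddCommGroup G] (g : G) {n : ℕ} (hg : n • g = 0) {a b : ℕ}
    (h : a % n = b % n) : a • g = b • g := by
  rw [nsmul_mod g hg a, nsmul_mod g hg b, h]

/-- The canonical generators of `A ⧸ V`. -/
def gV (V : AddSubgroup (A ℓ Ω f)) (v : Ω) : A ℓ Ω f ⧸ V := ((eA ℓ Ω f v 1 : A ℓ Ω f) : A ℓ Ω f ⧸ V)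

theorem redc_eA (v u : Ω) (m : ℕ) (h : (m : ℕ∞) ≤ f u) :
    redc ℓ (f u) (m : ℕ∞) h (eA ℓ Ω f v 1 u) = if v = u then 1 else 0 := by
  rcases eq_or_ne v u with rfl | hne
  · rw [eA_same, map_one, if_pos rfl]
  · rw [eA_ne ℓ Ω f v u 1 hne, map_zero, if_neg hne]

theorem gV_torsion {S : Finset Ω} {k : ℕ} {V : AddSubgroup (A ℓ Ω f)}
    (hSV : USk ℓ Ω f S k ≤ V) {v : Ω} (hv : v ∈ S) :
    (ℓ ^ trn (f v) k) • gV ℓ Ω f V v = 0 := by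
  rw [gV, show ((eA ℓ Ω f v 1 : A ℓ Ω f) : A ℓ Ω f ⧸ V)
      = QuotientAddGroup.mk' V (eA ℓ Ω f v 1) from rfl, ← map_nsmul,
    QuotientAddGroup.mk'_apply, QuotientAddGroup.eq_zero_iff]
  apply hSV
  rw [mem_USk]
  intro w hw
  rcases eq_or_ne w v with rfl | hne
  · rw [Pi.smul_apply, eA_same, map_nsmul, map_one]
    have : (ℓ ^ trn (f w) k) • (1 : Mc ℓ ((trn (f w) k : ℕ) : ℕ∞)) = ((ℓ ^ trn (f w) k : ℕ) :
        Mc ℓ ((trn (f w) k : ℕ) : ℕ∞)) := by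
      rw [nsmul_eq_mul, mul_one]
    rw [this]
    exact (show ((ℓ ^ trn (f w) k : ℕ) : ZMod (ℓ ^ trn (f w) k)) = 0 from ZMod.natCast_self _)
  · rw [Pi.smul_apply, eA_ne ℓ Ω f v w 1 (Ne.symm hne), smul_zero, map_zero]

theorem wedge_gg_torsion {S : Finset Ω} {k : ℕ} {V : AddSubgroup (A ℓ Ω f)}
    (hSV : USk ℓ Ω f S k ≤ V) {v w : Ω} (hv : v ∈ S) (hw : w ∈ S) :
    (ℓ ^ min (trn (f v) k) (trn (f w) k)) • wedge (gV ℓ Ω f V v) (gV ℓ Ω f V w) = 0 := by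
  rcases min_cases (trn (f v) k) (trn (f w) k) with ⟨h1, _⟩ | ⟨h1, _⟩
  · rw [h1, ← wedge_nsmul_left, gV_torsion ℓ Ω f hSV hv, wedge_zero_left]
  · rw [h1, ← wedge_nsmul_right, gV_torsion ℓ Ω f hSV hw, wedge_zero_right]

/-- Every class in `A ⧸ V` is a combination of the canonical generators. -/
theorem mk_eq_sum {S : Finset Ω} {k : ℕ} {V : AddSubgroup (A ℓ Ω f)}
    (hSV : USk ℓ Ω f S k ≤ V) (x : A ℓ Ω f) :
    ((x : A ℓ Ω f ⧸ V))
      = ∑ v ∈ S, (mval ℓ (redc ℓ (f v) ((trn (f v) k : ℕ) : ℕ∞) (trn_le _ _) (x v)))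
          • gV ℓ Ω f V v := by
  have hmem : x - ∑ v ∈ S, (mval ℓ (redc ℓ (f v) ((trn (f v) k : ℕ) : ℕ∞) (trn_le _ _) (x v)))
      • eA ℓ Ω f v 1 ∈ USk ℓ Ω f S k := by
    rw [mem_USk]
    intro w hw
    rw [Pi.sub_apply, map_sub]
    have hsum : (∑ v ∈ S, (mval ℓ (redc ℓ (f v) ((trn (f v) k : ℕ) : ℕ∞) (trn_le _ _) (x v)))
        • eA ℓ Ω f v 1) w
        = (mval ℓ (redc ℓ (f w) ((trn (f w) k : ℕ) : ℕ∞) (trn_le _ _) (x w)))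
          • eA ℓ Ω f w 1 w := by
      rw [Finset.sum_apply]
      refine Finset.sum_eq_single_of_mem w hw ?_
      intro v hv hvw
      rw [Pi.smul_apply, eA_ne ℓ Ω f v w 1 hvw, smul_zero]
    rw [hsum, eA_same, map_nsmul, map_one]
    have : (mval ℓ (redc ℓ (f w) ((trn (f w) k : ℕ) : ℕ∞) (trn_le _ _) (x w)))
        • (1 : Mc ℓ ((trn (f w) k : ℕ) : ℕ∞))
        = ((mval ℓ (redc ℓ (f w) ((trn (f w) k : ℕ) : ℕ∞) (trn_le _ _) (x w)) : ℕ)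
            : Mc ℓ ((trn (f w) k : ℕ) : ℕ∞)) := by
      rw [nsmul_eq_mul, mul_one]
    rw [this, mval_natCast_self, sub_self]
  have heq : ((x : A ℓ Ω f ⧸ V))
      = ((∑ v ∈ S, (mval ℓ (redc ℓ (f v) ((trn (f v) k : ℕ) : ℕ∞) (trn_le _ _) (x v)))
          • eA ℓ Ω f v 1 : A ℓ Ω f) : A ℓ Ω f ⧸ V) := by
    rw [QuotientAddGroup.eq_iff_sub_mem]
    exact hSV hmem
  rw [heq, QuotientAddGroup.mk_sum]
  refine Finset.sum_congr rfl fun v _ => ?_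
  rw [show (((mval ℓ (redc ℓ (f v) ((trn (f v) k : ℕ) : ℕ∞) (trn_le _ _) (x v)))
      • eA ℓ Ω f v 1 : A ℓ Ω f) : A ℓ Ω f ⧸ V)
    = QuotientAddGroup.mk' V ((mval ℓ (redc ℓ (f v) ((trn (f v) k : ℕ) : ℕ∞) (trn_le _ _) (x v)))
      • eA ℓ Ω f v 1) from rfl, map_nsmul]
  rfl

theorem dA_eA (p : PP Ω) (m : ℕ) (hm : (m : ℕ∞) ≤ np Ω f p) {v' w' : Ω} (hvw : v' < w') :
    dA ℓ Ω f p m hm (eA ℓ Ω f v' 1) (eA ℓ Ω f w' 1)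
      = if v' = p.1.1 ∧ w' = p.1.2 then 1 else 0 := by
  rw [dA_apply, redc_eA, redc_eA, redc_eA, redc_eA]
  have h2 : (if v' = p.1.2 then (1 : Mc ℓ (m : ℕ∞)) else 0)
      * (if w' = p.1.1 then (1 : Mc ℓ (m : ℕ∞)) else 0) = 0 := by
    by_cases ha2 : v' = p.1.2
    · by_cases hb : w' = p.1.1
      · exfalso
        rw [ha2, hb] at hvw
        exact lt_asymm p.2 hvw
      · rw [if_neg hb, mul_zero]
    · rw [if_neg ha2, zero_mul]
  rw [h2, sub_zero]
  by_cases ha : v' = p.1.1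
  · by_cases hb : w' = p.1.2
    · rw [if_pos ha, if_pos hb, if_pos ⟨ha, hb⟩, mul_one]
    · rw [if_neg hb, if_pos ha, mul_zero, if_neg (by tauto)]
  · rw [if_neg ha, zero_mul, if_neg (by tauto)]

/-- Pairs with entries in `S`. -/
def PS (S : Finset Ω) : Finset (Ω × Ω) := (S ×ˢ S).filter (fun q => q.1 < q.2)

def pq {S : Finset Ω} (q : {q : Ω × Ω // q ∈ PS Ω S}) : PP Ω :=
  ⟨q.1, (Finset.mem_filter.mp q.2).2⟩

theorem pq_fst_mem {S : Finset Ω} (q : {q : Ω × Ω // q ∈ PS Ω S}) : q.1.1 ∈ S :=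
  (Finset.mem_product.mp (Finset.mem_filter.mp q.2).1).1

theorem pq_snd_mem {S : Finset Ω} (q : {q : Ω × Ω // q ∈ PS Ω S}) : q.1.2 ∈ S :=
  (Finset.mem_product.mp (Finset.mem_filter.mp q.2).1).2

theorem mem_PS {S : Finset Ω} {v w : Ω} (hv : v ∈ S) (hw : w ∈ S) (h : v < w) :
    (v, w) ∈ PS Ω S :=
  Finset.mem_filter.mpr ⟨Finset.mem_product.mpr ⟨hv, hw⟩, h⟩

theorem Sp_subset {S : Finset Ω} (q : {q : Ω × Ω // q ∈ PS Ω S}) : Sp Ω (pq Ω q) ⊆ S := by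
  rw [Sp, Finset.insert_subset_iff, Finset.singleton_subset_iff]
  exact ⟨pq_fst_mem Ω q, pq_snd_mem Ω q⟩

/-- The level of the pair `q` truncated at `k`. -/
def mq {S : Finset Ω} (q : {q : Ω × Ω // q ∈ PS Ω S}) (k : ℕ) : ℕ := trn (np Ω f (pq Ω q)) k

theorem USk_le_Sp {S : Finset Ω} (k : ℕ) (q : {q : Ω × Ω // q ∈ PS Ω S}) :
    USk ℓ Ω f S k ≤ USk ℓ Ω f (Sp Ω (pq Ω q)) (mq Ω f q k) :=
  USk_anti ℓ Ω f (Sp_subset Ω q) (trn_le_k _ _)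

theorem wedge_gq_torsion {S : Finset Ω} {k : ℕ} {V : AddSubgroup (A ℓ Ω f)}
    (hSV : USk ℓ Ω f S k ≤ V) (q : {q : Ω × Ω // q ∈ PS Ω S}) :
    (ℓ ^ mq Ω f q k) • wedge (gV ℓ Ω f V q.1.1) (gV ℓ Ω f V q.1.2) = 0 := by
  rw [mq, trn_min]
  exact wedge_gg_torsion ℓ Ω f hSV (pq_fst_mem Ω q) (pq_snd_mem Ω q)

/-- The domain of the finite-level comparison map. -/
def DOM (S : Finset Ω) (k : ℕ) : Type :=
  ∀ q : {q : Ω × Ω // q ∈ PS Ω S}, Mc ℓ ((mq Ω f q k : ℕ) : ℕ∞)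

instance (S : Finset Ω) (k : ℕ) : AddCommGroup (DOM ℓ Ω f S k) :=
  inferInstanceAs (AddCommGroup (∀ q : {q : Ω × Ω // q ∈ PS Ω S},
    Mc ℓ ((mq Ω f q k : ℕ) : ℕ∞)))

/-- The map sending `c` to `c • (g_v ∧ g_w)`. -/
def liftE {S : Finset Ω} {k : ℕ} {V : AddSubgroup (A ℓ Ω f)} (hSV : USk ℓ Ω f S k ≤ V)
    (q : {q : Ω × Ω // q ∈ PS Ω S}) :
    Mc ℓ ((mq Ω f q k : ℕ) : ℕ∞) →+ Wedge2 (A ℓ Ω f ⧸ V) :=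
  ZMod.lift (ℓ ^ mq Ω f q k)
    ⟨zmultiplesHom _ (wedge (gV ℓ Ω f V q.1.1) (gV ℓ Ω f V q.1.2)), by
      rw [zmultiplesHom_apply, natCast_zsmul]
      exact wedge_gq_torsion ℓ Ω f hSV q⟩

theorem liftE_apply {S : Finset Ω} {k : ℕ} {V : AddSubgroup (A ℓ Ω f)}
    (hSV : USk ℓ Ω f S k ≤ V) (q : {q : Ω × Ω // q ∈ PS Ω S})
    (c : Mc ℓ ((mq Ω f q k : ℕ) : ℕ∞)) :
    liftE ℓ Ω f hSV q c = (mval ℓ c) • wedge (gV ℓ Ω f V q.1.1) (gV ℓ Ω f V q.1.2) := by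
  haveI : NeZero (ℓ ^ mq Ω f q k) := ⟨lpow_ne_zero ℓ _⟩
  have hc : c = (((mval ℓ c : ℕ) : ℤ) : ZMod (ℓ ^ mq Ω f q k)) := by
    push_cast
    exact (ZMod.natCast_rightInverse (show ZMod (ℓ ^ mq Ω f q k) from c)).symm
  have h2 : liftE ℓ Ω f hSV q (((mval ℓ c : ℕ) : ℤ) : ZMod (ℓ ^ mq Ω f q k))
      = ((mval ℓ c : ℕ) : ℤ) • wedge (gV ℓ Ω f V q.1.1) (gV ℓ Ω f V q.1.2) :=
    ZMod.lift_coe _ _ _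
  conv_lhs => rw [hc]
  rw [h2, natCast_zsmul]

/-- The finite-level comparison map. -/
def EW (S : Finset Ω) (k : ℕ) {V : AddSubgroup (A ℓ Ω f)} (hSV : USk ℓ Ω f S k ≤ V) :
    DOM ℓ Ω f S k →+ Wedge2 (A ℓ Ω f ⧸ V) :=
  ∑ q : {q : Ω × Ω // q ∈ PS Ω S},
    (liftE ℓ Ω f hSV q).comp (Pi.evalAddMonoidHom _ q)

theorem EW_apply (S : Finset Ω) (k : ℕ) {V : AddSubgroup (A ℓ Ω f)}
    (hSV : USk ℓ Ω f S k ≤ V) (t : DOM ℓ Ω f S k) :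
    EW ℓ Ω f S k hSV t = ∑ q : {q : Ω × Ω // q ∈ PS Ω S},
      (mval ℓ (t q)) • wedge (gV ℓ Ω f V q.1.1) (gV ℓ Ω f V q.1.2) := by
  rw [EW, AddMonoidHom.finset_sum_apply]
  exact Finset.sum_congr rfl fun q _ => by
    erw [AddMonoidHom.comp_apply]
    exact liftE_apply ℓ Ω f hSV q (t q)

theorem EW_single (S : Finset Ω) (k : ℕ) {V : AddSubgroup (A ℓ Ω f)}
    (hSV : USk ℓ Ω f S k ≤ V) (q0 : {q : Ω × Ω // q ∈ PS Ω S})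
    (c : Mc ℓ ((mq Ω f q0 k : ℕ) : ℕ∞)) :
    EW ℓ Ω f S k hSV (Pi.single q0 c)
      = (mval ℓ c) • wedge (gV ℓ Ω f V q0.1.1) (gV ℓ Ω f V q0.1.2) := by
  erw [EW_apply]
  have h1 : ∀ q ∈ Finset.univ, q ≠ q0 →
      (mval ℓ (Pi.single (M := fun q => Mc ℓ ((mq Ω f q k : ℕ) : ℕ∞)) q0 c q))
        • wedge (gV ℓ Ω f V q.1.1) (gV ℓ Ω f V q.1.2) = 0 := by
    intro q _ hq
    rw [Pi.single_eq_of_ne hq, mval_zero, zero_smul]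
  rw [Finset.sum_eq_single_of_mem q0 (Finset.mem_univ _) h1,
    Pi.single_eq_same]

theorem wedge_gg_mem_range_lt (S : Finset Ω) (k : ℕ) {V : AddSubgroup (A ℓ Ω f)}
    (hSV : USk ℓ Ω f S k ≤ V) {v w : Ω} (hv : v ∈ S) (hw : w ∈ S) (h : v < w) :
    wedge (gV ℓ Ω f V v) (gV ℓ Ω f V w) ∈ (EW ℓ Ω f S k hSV).range := by
  refine ⟨Pi.single ⟨(v, w), mem_PS Ω hv hw h⟩ 1, ?_⟩
  rw [EW_single]
  have htor := wedge_gq_torsion ℓ Ω f hSV ⟨(v, w), mem_PS Ω hv hw h⟩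
  have hmod : mval ℓ (1 : Mc ℓ ((mq Ω f ⟨(v, w), mem_PS Ω hv hw h⟩ k : ℕ) : ℕ∞))
      % ℓ ^ mq Ω f ⟨(v, w), mem_PS Ω hv hw h⟩ k
      = 1 % ℓ ^ mq Ω f ⟨(v, w), mem_PS Ω hv hw h⟩ k := by
    show ZMod.val ((1 : ZMod (ℓ ^ _))) % _ = _
    rw [show (1 : ZMod (ℓ ^ mq Ω f ⟨(v, w), mem_PS Ω hv hw h⟩ k)) = ((1 : ℕ) : ZMod _) from
      (Nat.cast_one).symm, ZMod.val_natCast]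
    exact Nat.mod_mod_of_dvd 1 dvd_rfl
  rw [nsmul_congr _ htor hmod, one_nsmul]

theorem wedge_gg_mem_range (S : Finset Ω) (k : ℕ) {V : AddSubgroup (A ℓ Ω f)}
    (hSV : USk ℓ Ω f S k ≤ V) {v w : Ω} (hv : v ∈ S) (hw : w ∈ S) :
    wedge (gV ℓ Ω f V v) (gV ℓ Ω f V w) ∈ (EW ℓ Ω f S k hSV).range := by
  rcases lt_trichotomy v w with h | rfl | h
  · exact wedge_gg_mem_range_lt ℓ Ω f S k hSV hv hw h
  · exact ⟨0, by rw [map_zero, wedge_self]⟩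
  · rw [wedge_antisymm]
    exact neg_mem (wedge_gg_mem_range_lt ℓ Ω f S k hSV hw hv h)

theorem EW_surj (S : Finset Ω) (k : ℕ) {V : AddSubgroup (A ℓ Ω f)}
    (hSV : USk ℓ Ω f S k ≤ V) :
    Function.Surjective (EW ℓ Ω f S k hSV) := by
  intro z
  have : z ∈ (EW ℓ Ω f S k hSV).range := by
    induction z using Wedge2.induction with
    | zero => exact zero_mem _
    | add a b ha hb => exact add_mem ha hb
    | wedge xq yq =>
      induction xq using QuotientAddGroup.induction_on with
      | H x =>
        induction yq using QuotientAddGroup.induction_on with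
        | H y =>
          rw [mk_eq_sum ℓ Ω f hSV x, mk_eq_sum ℓ Ω f hSV y]
          have hexp : wedge
              (∑ v ∈ S, (mval ℓ (redc ℓ (f v) ((trn (f v) k : ℕ) : ℕ∞) (trn_le _ _) (x v)))
                • gV ℓ Ω f V v)
              (∑ w ∈ S, (mval ℓ (redc ℓ (f w) ((trn (f w) k : ℕ) : ℕ∞) (trn_le _ _) (y w)))
                • gV ℓ Ω f V w)
              = ∑ v ∈ S, ∑ w ∈ S,
                  (mval ℓ (redc ℓ (f v) ((trn (f v) k : ℕ) : ℕ∞) (trn_le _ _) (x v)))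
                  • (mval ℓ (redc ℓ (f w) ((trn (f w) k : ℕ) : ℕ∞) (trn_le _ _) (y w)))
                  • wedge (gV ℓ Ω f V v) (gV ℓ Ω f V w) := by
            rw [wedge_sum_left]
            refine Finset.sum_congr rfl fun v _ => ?_
            rw [wedge_sum_right]
            refine Finset.sum_congr rfl fun w _ => ?_
            rw [wedge_nsmul_left, wedge_nsmul_right]
          rw [hexp]
          refine AddSubgroup.sum_mem _ fun v hv => AddSubgroup.sum_mem _ fun w hw => ?_
          exact nsmul_mem (nsmul_mem (wedge_gg_mem_range ℓ Ω f S k hSV hv hw) _) _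
  exact this

end FiniteLevel
section Injectivity

variable (ℓ : ℕ) [hℓ : Fact ℓ.Prime] (Ω : Type) [LinearOrder Ω] (f : Ω → ℕ∞)

theorem Dk_wedge_gV (p : PP Ω) (m : ℕ) (hm : (m : ℕ∞) ≤ np Ω f p) (V : AddSubgroup (A ℓ Ω f))
    (hV : V ≤ USk ℓ Ω f (Sp Ω p) m) (v w : Ω) :
    Dk ℓ Ω f p m hm V hV (wedge (gV ℓ Ω f V v) (gV ℓ Ω f V w))
      = dA ℓ Ω f p m hm (eA ℓ Ω f v 1) (eA ℓ Ω f w 1) :=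
  Dk_wedge ℓ Ω f p m hm V hV (eA ℓ Ω f v 1) (eA ℓ Ω f w 1)

theorem Dk_EW (S : Finset Ω) (k : ℕ) (q0 : {q : Ω × Ω // q ∈ PS Ω S}) (t : DOM ℓ Ω f S k)
    (hU : USk ℓ Ω f S k ≤ USk ℓ Ω f (Sp Ω (pq Ω q0)) (mq Ω f q0 k)) :
    Dk ℓ Ω f (pq Ω q0) (mq Ω f q0 k) (trn_le _ _) (USk ℓ Ω f S k) hU
      (EW ℓ Ω f S k (le_refl (USk ℓ Ω f S k)) t) = t q0 := by
  rw [EW_apply, map_sum]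
  have h1 : ∀ q ∈ (Finset.univ : Finset {q : Ω × Ω // q ∈ PS Ω S}), q ≠ q0 →
      Dk ℓ Ω f (pq Ω q0) (mq Ω f q0 k) (trn_le _ _) (USk ℓ Ω f S k) hU
        ((mval ℓ (t q)) • wedge (gV ℓ Ω f (USk ℓ Ω f S k) q.1.1)
          (gV ℓ Ω f (USk ℓ Ω f S k) q.1.2)) = 0 := by
    intro q _ hq
    erw [map_nsmul, Dk_wedge_gV, dA_eA ℓ Ω f _ _ _ ((Finset.mem_filter.mp q.2).2)]
    rw [if_neg, smul_zero]
    rintro ⟨h1, h2⟩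
    exact hq (Subtype.ext (Prod.ext h1 h2))
  erw [Finset.sum_eq_single_of_mem q0 (Finset.mem_univ _) h1, map_nsmul, Dk_wedge_gV,
    dA_eA ℓ Ω f _ _ _ ((Finset.mem_filter.mp q0.2).2), if_pos ⟨rfl, rfl⟩]
  have : (mval ℓ (t q0)) • (1 : Mc ℓ ((mq Ω f q0 k : ℕ) : ℕ∞))
      = ((mval ℓ (t q0) : ℕ) : Mc ℓ ((mq Ω f q0 k : ℕ) : ℕ∞)) := by
    rw [nsmul_eq_mul, mul_one]
  rw [this, mval_natCast_self]

theorem psiHom_inj : Function.Injective ⇑(psiHom ℓ Ω f) := by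
  rw [injective_iff_map_eq_zero]
  intro z hz
  apply Subtype.ext
  funext U
  show z.1 U = 0
  obtain ⟨S, k, hcof⟩ := exists_USk_le ℓ Ω f U
  have hz0 : z.1 (oUSk ℓ Ω f S k) = 0 := by
    obtain ⟨t, ht⟩ := EW_surj ℓ Ω f S k (le_refl _) (z.1 (oUSk ℓ Ω f S k))
    have ht0 : t = 0 := by
      funext q0
      have h1 := Dk_EW ℓ Ω f S k q0 t (USk_le_Sp ℓ Ω f k q0)
      rw [ht] at h1
      have h2 := psiEl_spec ℓ Ω f z (pq Ω q0) (mq Ω f q0 k) (trn_le _ _)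
      have h3 : psiEl ℓ Ω f z (pq Ω q0) = 0 := congrFun hz (pq Ω q0)
      rw [h3, map_zero] at h2
      have h4 : z.1 (oUSk ℓ Ω f (Sp Ω (pq Ω q0)) (mq Ω f q0 k))
          = transMap (A ℓ Ω f) (U := oUSk ℓ Ω f S k) (V := oUSk ℓ Ω f (Sp Ω (pq Ω q0)) (mq Ω f q0 k)) (USk_le_Sp ℓ Ω f k q0) (z.1 (oUSk ℓ Ω f S k)) :=
        (z.2 (oUSk ℓ Ω f S k) (oUSk ℓ Ω f (Sp Ω (pq Ω q0)) (mq Ω f q0 k))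
          (USk_le_Sp ℓ Ω f k q0)).symm
      have h5 : Dk ℓ Ω f (pq Ω q0) (mq Ω f q0 k) (trn_le _ _)
            (USk ℓ Ω f (Sp Ω (pq Ω q0)) (mq Ω f q0 k)) le_rfl
            (transMap (A ℓ Ω f) (U := oUSk ℓ Ω f S k) (V := oUSk ℓ Ω f (Sp Ω (pq Ω q0)) (mq Ω f q0 k)) (USk_le_Sp ℓ Ω f k q0) (z.1 (oUSk ℓ Ω f S k)))
          = Dk ℓ Ω f (pq Ω q0) (mq Ω f q0 k) (trn_le _ _) (USk ℓ Ω f S k)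
            (USk_le_Sp ℓ Ω f k q0) (z.1 (oUSk ℓ Ω f S k)) :=
        Dk_trans ℓ Ω f (pq Ω q0) (mq Ω f q0 k) (trn_le _ _)
          (U := oUSk ℓ Ω f S k)
          (V := oUSk ℓ Ω f (Sp Ω (pq Ω q0)) (mq Ω f q0 k))
          (USk_le_Sp ℓ Ω f k q0) (USk_le_Sp ℓ Ω f k q0) le_rfl (z.1 (oUSk ℓ Ω f S k))
      show t q0 = 0
      calc t q0 = Dk ℓ Ω f (pq Ω q0) (mq Ω f q0 k) (trn_le _ _) (USk ℓ Ω f S k)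
            (USk_le_Sp ℓ Ω f k q0) (z.1 (oUSk ℓ Ω f S k)) := h1.symm
        _ = Dk ℓ Ω f (pq Ω q0) (mq Ω f q0 k) (trn_le _ _)
            (USk ℓ Ω f (Sp Ω (pq Ω q0)) (mq Ω f q0 k)) le_rfl
            (transMap (A ℓ Ω f) (U := oUSk ℓ Ω f S k) (V := oUSk ℓ Ω f (Sp Ω (pq Ω q0)) (mq Ω f q0 k)) (USk_le_Sp ℓ Ω f k q0) (z.1 (oUSk ℓ Ω f S k))) := h5.symm
        _ = 0 := by rw [← h4]; exact h2.symm
    rw [ht0, map_zero] at ht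
    exact ht.symm
  rw [← z.2 (oUSk ℓ Ω f S k) U hcof, hz0, map_zero]

end Injectivity
section Surjectivity

variable (ℓ : ℕ) [hℓ : Fact ℓ.Prime] (Ω : Type) [LinearOrder Ω] (f : Ω → ℕ∞)

theorem gV_zero {S : Finset Ω} {k : ℕ} {V : AddSubgroup (A ℓ Ω f)}
    (hSV : USk ℓ Ω f S k ≤ V) {v : Ω} (hv : v ∉ S) : gV ℓ Ω f V v = 0 := by
  rw [gV, show ((eA ℓ Ω f v 1 : A ℓ Ω f) : A ℓ Ω f ⧸ V)
      = QuotientAddGroup.mk' V (eA ℓ Ω f v 1) from rfl, QuotientAddGroup.mk'_apply,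
    QuotientAddGroup.eq_zero_iff]
  apply hSV
  rw [mem_USk]
  intro w hw
  rw [eA_ne ℓ Ω f v w 1 (fun h => hv (h ▸ hw)), map_zero]

/-- The term of the explicit inverse at the pair `q`. -/
def wvterm (V : AddSubgroup (A ℓ Ω f)) (k : ℕ) (t : T ℓ Ω f) (q : Ω × Ω) :
    Wedge2 (A ℓ Ω f ⧸ V) :=
  if h : q.1 < q.2 then
    (mval ℓ (redc ℓ (np Ω f ⟨q, h⟩) ((trn (np Ω f ⟨q, h⟩) k : ℕ) : ℕ∞) (trn_le _ _) (t ⟨q, h⟩)))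
      • wedge (gV ℓ Ω f V q.1) (gV ℓ Ω f V q.2)
  else 0

/-- The explicit inverse at level `(S, k)`. -/
def WV (V : AddSubgroup (A ℓ Ω f)) (S : Finset Ω) (k : ℕ) (t : T ℓ Ω f) :
    Wedge2 (A ℓ Ω f ⧸ V) :=
  ∑ q ∈ PS Ω S, wvterm ℓ Ω f V k t q

theorem transMap_WV {U V : OpenSub (A ℓ Ω f)} (hUV : U.1 ≤ V.1) (S : Finset Ω) (k : ℕ)
    (t : T ℓ Ω f) :
    transMap (A ℓ Ω f) hUV (WV ℓ Ω f U.1 S k t) = WV ℓ Ω f V.1 S k t := by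
  rw [WV, WV, map_sum]
  refine Finset.sum_congr rfl fun q _ => ?_
  rw [wvterm, wvterm]
  by_cases h : q.1 < q.2
  · rw [dif_pos h, dif_pos h, map_nsmul]
    exact congrArg _ (transMap_wedge hUV (eA ℓ Ω f q.1 1) (eA ℓ Ω f q.2 1))
  · rw [dif_neg h, dif_neg h, map_zero]

theorem wvterm_zero_of_not_mem {S : Finset Ω} {k k' : ℕ} {V : AddSubgroup (A ℓ Ω f)}
    (hSV : USk ℓ Ω f S k ≤ V) (t : T ℓ Ω f) {q : Ω × Ω}
    (hq : q.1 ∉ S ∨ q.2 ∉ S) : wvterm ℓ Ω f V k' t q = 0 := by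
  rw [wvterm]
  by_cases h : q.1 < q.2
  · rw [dif_pos h]
    rcases hq with hv | hv
    · rw [gV_zero ℓ Ω f hSV hv, wedge_zero_left, smul_zero]
    · rw [gV_zero ℓ Ω f hSV hv, wedge_zero_right, smul_zero]
  · rw [dif_neg h]

theorem mval_redc_mod {a b : ℕ} (hab : a ≤ b) (c : Mc ℓ ((b : ℕ) : ℕ∞)) :
    mval ℓ (redc ℓ (b : ℕ∞) (a : ℕ∞) (by exact_mod_cast hab) c) = mval ℓ c % ℓ ^ a := by
  show ZMod.val (ZMod.castHom (pow_dvd_pow ℓ hab) (ZMod (ℓ ^ a)) (show ZMod (ℓ ^ b) from c)) = _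
  haveI : NeZero (ℓ ^ b) := ⟨lpow_ne_zero ℓ b⟩
  rw [ZMod.castHom_apply, ← ZMod.natCast_val, ZMod.val_natCast]
  rfl

theorem wvterm_congr_k {S : Finset Ω} {k k' : ℕ} (hkk' : k ≤ k') {V : AddSubgroup (A ℓ Ω f)}
    (hSV : USk ℓ Ω f S k ≤ V) (t : T ℓ Ω f) {q : Ω × Ω} (hq1 : q.1 ∈ S) (hq2 : q.2 ∈ S) :
    wvterm ℓ Ω f V k' t q = wvterm ℓ Ω f V k t q := by
  rw [wvterm, wvterm]
  by_cases h : q.1 < q.2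
  · rw [dif_pos h, dif_pos h]
    set p : PP Ω := ⟨q, h⟩ with hp
    have htor : (ℓ ^ trn (np Ω f p) k) • wedge (gV ℓ Ω f V q.1) (gV ℓ Ω f V q.2) = 0 := by
      rw [trn_min]
      exact wedge_gg_torsion ℓ Ω f hSV hq1 hq2
    refine nsmul_congr _ htor ?_
    have hred : redc ℓ (np Ω f p) ((trn (np Ω f p) k : ℕ) : ℕ∞) (trn_le _ _) (t p)
        = redc ℓ ((trn (np Ω f p) k' : ℕ) : ℕ∞) ((trn (np Ω f p) k : ℕ) : ℕ∞)
            (by exact_mod_cast trn_mono _ hkk')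
            (redc ℓ (np Ω f p) ((trn (np Ω f p) k' : ℕ) : ℕ∞) (trn_le _ _) (t p)) := by
      rw [redc_redc]
    rw [hred, mval_redc_mod ℓ (trn_mono _ hkk'), Nat.mod_mod_of_dvd _ dvd_rfl]
  · rw [dif_neg h, dif_neg h]

theorem WV_mono {S S' : Finset Ω} {k k' : ℕ} (hS : S ⊆ S') (hk : k ≤ k')
    {V : AddSubgroup (A ℓ Ω f)} (hSV : USk ℓ Ω f S k ≤ V) (t : T ℓ Ω f) :
    WV ℓ Ω f V S' k' t = WV ℓ Ω f V S k t := by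
  rw [WV, WV]
  have hPS : PS Ω S ⊆ PS Ω S' := fun q hq => by
    rw [PS, Finset.mem_filter, Finset.mem_product] at hq ⊢
    exact ⟨⟨hS hq.1.1, hS hq.1.2⟩, hq.2⟩
  rw [← Finset.sum_subset hPS (fun q hq1 hq2 => ?_)]
  · refine Finset.sum_congr rfl fun q hq => ?_
    rw [PS, Finset.mem_filter, Finset.mem_product] at hq
    exact wvterm_congr_k ℓ Ω f hk hSV t hq.1.1 hq.1.2
  · -- q ∈ PS S' but not in PS S : some coordinate not in S
    rw [PS, Finset.mem_filter, Finset.mem_product] at hq1 hq2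
    have : q.1 ∉ S ∨ q.2 ∉ S := by
      by_contra hc
      push_neg at hc
      exact hq2 ⟨⟨hc.1, hc.2⟩, hq1.2⟩
    exact wvterm_zero_of_not_mem ℓ Ω f hSV t this

theorem WV_welldef {S1 S2 : Finset Ω} {k1 k2 : ℕ} {V : AddSubgroup (A ℓ Ω f)}
    (h1 : USk ℓ Ω f S1 k1 ≤ V) (h2 : USk ℓ Ω f S2 k2 ≤ V) (t : T ℓ Ω f) :
    WV ℓ Ω f V S1 k1 t = WV ℓ Ω f V S2 k2 t := by
  rw [← WV_mono ℓ Ω f Finset.subset_union_left (le_max_left k1 k2) h1 t,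
    ← WV_mono ℓ Ω f Finset.subset_union_right (le_max_right k1 k2) h2 t]

/-- Chosen cofinal data for each open subgroup. -/
def SkS (U : OpenSub (A ℓ Ω f)) : Finset Ω := (exists_USk_le ℓ Ω f U).choose

def SkK (U : OpenSub (A ℓ Ω f)) : ℕ := (exists_USk_le ℓ Ω f U).choose_spec.choose

theorem SkLe (U : OpenSub (A ℓ Ω f)) : USk ℓ Ω f (SkS ℓ Ω f U) (SkK ℓ Ω f U) ≤ U.1 :=
  (exists_USk_le ℓ Ω f U).choose_spec.choose_spec

/-- The explicit inverse of `ψ`. -/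
def phi (t : T ℓ Ω f) : ProfWedge2 (A ℓ Ω f) :=
  ⟨fun U => WV ℓ Ω f U.1 (SkS ℓ Ω f U) (SkK ℓ Ω f U) t, by
    intro U V h
    rw [show (fun U : OpenSub (A ℓ Ω f) => WV ℓ Ω f U.1 (SkS ℓ Ω f U) (SkK ℓ Ω f U) t) U
        = WV ℓ Ω f U.1 (SkS ℓ Ω f U) (SkK ℓ Ω f U) t from rfl]
    rw [transMap_WV ℓ Ω f h]
    exact WV_welldef ℓ Ω f ((SkLe ℓ Ω f U).trans h) (SkLe ℓ Ω f V) t⟩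

theorem Dk_WV (p : PP Ω) (m k : ℕ) (hm : (m : ℕ∞) ≤ np Ω f p) (hmk : m ≤ k)
    {S : Finset Ω} (hSp : Sp Ω p ⊆ S) {V : AddSubgroup (A ℓ Ω f)}
    (hV : V ≤ USk ℓ Ω f (Sp Ω p) m) (t : T ℓ Ω f) :
    Dk ℓ Ω f p m hm V hV (WV ℓ Ω f V S k t) = redc ℓ (np Ω f p) (m : ℕ∞) hm (t p) := by
  rw [WV, map_sum]
  have hveS : p.1.1 ∈ S := hSp (vp_mem_Sp Ω p)
  have hweS : p.1.2 ∈ S := hSp (wp_mem_Sp Ω p)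
  have hmem : p.1 ∈ PS Ω S := mem_PS Ω hveS hweS p.2
  have hothers : ∀ q ∈ PS Ω S, q ≠ p.1 →
      Dk ℓ Ω f p m hm V hV (wvterm ℓ Ω f V k t q) = 0 := by
    intro q hq hqp
    rw [wvterm]
    by_cases h : q.1 < q.2
    · rw [dif_pos h, map_nsmul, Dk_wedge_gV, dA_eA ℓ Ω f p m hm h, if_neg, smul_zero]
      rintro ⟨h1, h2⟩
      exact hqp (Prod.ext h1 h2)
    · rw [dif_neg h, map_zero]
  rw [Finset.sum_eq_single_of_mem p.1 hmem hothers]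
  rw [wvterm, dif_pos p.2]
  show Dk ℓ Ω f p m hm V hV
      ((mval ℓ (redc ℓ (np Ω f p) ((trn (np Ω f p) k : ℕ) : ℕ∞) (trn_le _ _) (t p)))
        • wedge (gV ℓ Ω f V p.1.1) (gV ℓ Ω f V p.1.2))
      = redc ℓ (np Ω f p) (m : ℕ∞) hm (t p)
  rw [map_nsmul, Dk_wedge_gV, dA_eA ℓ Ω f p m hm p.2, if_pos ⟨rfl, rfl⟩]
  have h1 : (mval ℓ (redc ℓ (np Ω f p) ((trn (np Ω f p) k : ℕ) : ℕ∞) (trn_le _ _) (t p)))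
      • (1 : Mc ℓ ((m : ℕ) : ℕ∞))
      = ((mval ℓ (redc ℓ (np Ω f p) ((trn (np Ω f p) k : ℕ) : ℕ∞) (trn_le _ _) (t p)) : ℕ)
          : Mc ℓ ((m : ℕ) : ℕ∞)) := by
    rw [nsmul_eq_mul, mul_one]
  rw [h1, mval_redc ℓ (le_trn hm hmk), redc_redc]

theorem psiHom_phi (t : T ℓ Ω f) : psiHom ℓ Ω f (phi ℓ Ω f t) = t := by
  funext p
  apply Mc.ext ℓ
  intro m hm
  rw [psiHom_apply, psiEl_spec]
  have h1 : (phi ℓ Ω f t).1 (oUSk ℓ Ω f (Sp Ω p) m)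
      = WV ℓ Ω f (oUSk ℓ Ω f (Sp Ω p) m).1
          (SkS ℓ Ω f (oUSk ℓ Ω f (Sp Ω p) m)) (SkK ℓ Ω f (oUSk ℓ Ω f (Sp Ω p) m)) t := rfl
  rw [h1, WV_welldef ℓ Ω f (SkLe ℓ Ω f (oUSk ℓ Ω f (Sp Ω p) m))
    (le_refl (USk ℓ Ω f (Sp Ω p) m)) t]
  exact Dk_WV ℓ Ω f p m m hm le_rfl (Finset.Subset.refl _) (le_refl _) t

theorem psiHom_surj : Function.Surjective ⇑(psiHom ℓ Ω f) := fun t =>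
  ⟨phi ℓ Ω f t, psiHom_phi ℓ Ω f t⟩

theorem phi_continuous : Continuous (phi ℓ Ω f) := by
  apply Continuous.subtype_mk
  apply continuous_pi
  intro U
  show Continuous fun t => WV ℓ Ω f U.1 (SkS ℓ Ω f U) (SkK ℓ Ω f U) t
  simp only [WV]
  apply continuous_finset_sum
  intro q _
  show Continuous fun t => wvterm ℓ Ω f U.1 (SkK ℓ Ω f U) t q
  by_cases h : q.1 < q.2
  · simp only [wvterm, dif_pos h]
    have : (fun t : T ℓ Ω f =>
        (mval ℓ (redc ℓ (np Ω f ⟨q, h⟩) ((trn (np Ω f ⟨q, h⟩) (SkK ℓ Ω f U) : ℕ) : ℕ∞)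
          (trn_le _ _) (t ⟨q, h⟩)))
          • wedge (gV ℓ Ω f U.1 q.1) (gV ℓ Ω f U.1 q.2))
        = (fun c : Mc ℓ ((trn (np Ω f ⟨q, h⟩) (SkK ℓ Ω f U) : ℕ) : ℕ∞) =>
            (mval ℓ c) • wedge (gV ℓ Ω f U.1 q.1) (gV ℓ Ω f U.1 q.2))
          ∘ (redc ℓ (np Ω f ⟨q, h⟩) ((trn (np Ω f ⟨q, h⟩) (SkK ℓ Ω f U) : ℕ) : ℕ∞) (trn_le _ _))
          ∘ (fun t : T ℓ Ω f => t ⟨q, h⟩) := rfl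
    rw [this]
    exact continuous_of_discreteTopology.comp
      ((continuous_redc ℓ _).comp (continuous_apply _))
  · simp only [wvterm, dif_neg h]
    exact continuous_const

end Surjectivity
section Uniqueness

variable (ℓ : ℕ) [hℓ : Fact ℓ.Prime] (Ω : Type) [LinearOrder Ω] (f : Ω → ℕ∞)

/-- The subgroup generated by the pure wedges. -/
def WSub : AddSubgroup (ProfWedge2 (A ℓ Ω f)) :=
  AddSubgroup.closure {w : ProfWedge2 (A ℓ Ω f) | ∃ x y : A ℓ Ω f, w = bUniv (A ℓ Ω f) x y}

theorem wedges_dense (z : ProfWedge2 (A ℓ Ω f)) :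
    z ∈ closure ((WSub ℓ Ω f : AddSubgroup (ProfWedge2 (A ℓ Ω f))) : Set _) := by
  rw [mem_closure_iff]
  intro O hO hzO
  obtain ⟨O', hO', rfl⟩ := isOpen_induced_iff.mp hO
  obtain ⟨I, u, hu, hsub⟩ := isOpen_pi_iff.mp hO' z.1 hzO
  set S0 : Finset Ω := I.sup (fun U => SkS ℓ Ω f U) with hS0
  set k0 : ℕ := I.sup (fun U => SkK ℓ Ω f U) with hk0
  have hle : ∀ U ∈ I, USk ℓ Ω f S0 k0 ≤ U.1 := by
    intro U hU
    refine le_trans (USk_anti ℓ Ω f ?_ ?_) (SkLe ℓ Ω f U)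
    · exact Finset.le_sup (f := fun U => SkS ℓ Ω f U) hU
    · exact Finset.le_sup (f := fun U => SkK ℓ Ω f U) hU
  have key : ∀ c : Wedge2 (A ℓ Ω f ⧸ (oUSk ℓ Ω f S0 k0).1),
      ∃ w, w ∈ WSub ℓ Ω f ∧ w.1 (oUSk ℓ Ω f S0 k0) = c := by
    intro c
    induction c using Wedge2.induction with
    | zero => exact ⟨0, zero_mem _, rfl⟩
    | add a b ha hb =>
        obtain ⟨wa, hwa, ha'⟩ := ha
        obtain ⟨wb, hwb, hb'⟩ := hb
        exact ⟨wa + wb, add_mem hwa hwb, by rw [← ha', ← hb']; rfl⟩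
    | wedge xq yq =>
      induction xq using QuotientAddGroup.induction_on with
      | H x =>
        induction yq using QuotientAddGroup.induction_on with
        | H y =>
            exact ⟨bUniv (A ℓ Ω f) x y, AddSubgroup.subset_closure ⟨x, y, rfl⟩, rfl⟩
  obtain ⟨w, hwG, hw0⟩ := key (z.1 (oUSk ℓ Ω f S0 k0))
  refine ⟨w, ?_, hwG⟩
  show w.1 ∈ O'
  apply hsub
  intro U hU
  have h1 : w.1 U = transMap (A ℓ Ω f) (hle U hU) (w.1 (oUSk ℓ Ω f S0 k0)) :=
    (w.2 (oUSk ℓ Ω f S0 k0) U (hle U hU)).symm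
  have h2 : z.1 U = transMap (A ℓ Ω f) (hle U hU) (z.1 (oUSk ℓ Ω f S0 k0)) :=
    (z.2 (oUSk ℓ Ω f S0 k0) U (hle U hU)).symm
  rw [h1, hw0, ← h2]
  exact (hu U hU).2

theorem psi_unique (ψ' : ProfWedge2 (A ℓ Ω f) →+ T ℓ Ω f) (hc : Continuous ⇑ψ')
    (hw : ∀ x y : A ℓ Ω f, ψ' (bUniv (A ℓ Ω f) x y) = detF ℓ Ω f x y) :
    ψ' = psiHom ℓ Ω f := by
  have hclosed : IsClosed {z : ProfWedge2 (A ℓ Ω f) | ψ' z = psiHom ℓ Ω f z} :=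
    isClosed_eq hc (psiHom_continuous ℓ Ω f)
  have hsub : ((WSub ℓ Ω f : AddSubgroup (ProfWedge2 (A ℓ Ω f))) : Set _)
      ⊆ {z : ProfWedge2 (A ℓ Ω f) | ψ' z = psiHom ℓ Ω f z} := by
    intro w hw'
    induction hw' using AddSubgroup.closure_induction with
    | mem w hmem =>
        obtain ⟨x, y, rfl⟩ := hmem
        show ψ' (bUniv (A ℓ Ω f) x y) = psiHom ℓ Ω f (bUniv (A ℓ Ω f) x y)
        rw [hw x y, psiHom_wedge]
    | zero => show ψ' 0 = psiHom ℓ Ω f 0; rw [map_zero, map_zero]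
    | add a b _ _ ha hb =>
        show ψ' (a + b) = psiHom ℓ Ω f (a + b)
        rw [map_add, map_add, ha, hb]
    | neg a _ ha =>
        show ψ' (-a) = psiHom ℓ Ω f (-a)
        rw [map_neg, map_neg, ha]
  apply AddMonoidHom.ext
  intro z
  have := closure_minimal hsub hclosed (wedges_dense ℓ Ω f z)
  exact this

end Uniqueness
theorem statement14 (ℓ : ℕ) [Fact ℓ.Prime]
    (Ω : Type) [LinearOrder Ω] [Countable Ω] (f : Ω → ℕ∞) :
    -- there is a unique continuous homomorphism `ψ_•` with
    -- `ψ_• (x ∧ y) = (x_v·y_w − x_w·y_v)_{v<w}`, ...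
    (∃! ψ : ProfWedge2 (A ℓ Ω f) →+ T ℓ Ω f,
      Continuous ⇑ψ ∧ ∀ x y : A ℓ Ω f, ψ (bUniv (A ℓ Ω f) x y) = detF ℓ Ω f x y) ∧
    -- ... and it is an isomorphism of topological groups:
    ∀ ψ : ProfWedge2 (A ℓ Ω f) →+ T ℓ Ω f, Continuous ⇑ψ →
      (∀ x y : A ℓ Ω f, ψ (bUniv (A ℓ Ω f) x y) = detF ℓ Ω f x y) →
      ∃ e : ProfWedge2 (A ℓ Ω f) ≃+ T ℓ Ω f,
        (∀ z, e z = ψ z) ∧ Continuous ⇑e ∧ Continuous ⇑e.symm := by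
  constructor
  · exact ⟨psiHom ℓ Ω f, ⟨psiHom_continuous ℓ Ω f, psiHom_wedge ℓ Ω f⟩,
      fun ψ' h => psi_unique ℓ Ω f ψ' h.1 h.2⟩
  · intro ψ hc hw
    have hpsi : ψ = psiHom ℓ Ω f := psi_unique ℓ Ω f ψ hc hw
    refine ⟨AddEquiv.ofBijective (psiHom ℓ Ω f) ⟨psiHom_inj ℓ Ω f, psiHom_surj ℓ Ω f⟩,
      ?_, ?_, ?_⟩
    · intro z
      rw [hpsi]
      rfl
    · exact psiHom_continuous ℓ Ω f
    · have hsymm : ⇑(AddEquiv.ofBijective (psiHom ℓ Ω f)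
          ⟨psiHom_inj ℓ Ω f, psiHom_surj ℓ Ω f⟩).symm = phi ℓ Ω f := by
        funext t
        apply psiHom_inj ℓ Ω f
        rw [psiHom_phi ℓ Ω f t]
        exact (AddEquiv.ofBijective (psiHom ℓ Ω f)
          ⟨psiHom_inj ℓ Ω f, psiHom_surj ℓ Ω f⟩).apply_symm_apply t
      rw [hsymm]
      exact phi_continuous ℓ Ω f
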